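/- arXiv:2110.14964 — 3 statements merged into one kernel-verified Lean document; each statement's English description precedes it below -/
import Mathlib

section
/- Let π be an α-integral path with Q_α(π) ≤ −1, and let 0 = t_0 < ⋯ < t_{ℓ+1} = 1 be its α-section decomposition. Then e_α(π) is defined, is again α-integral, and satisfies Q_α(e_α π) = Q_α(π) + 1; the α-section decomposition of e_α(π) has the same subdivision points t_0 < ⋯ < t_{ℓ+1}. Moreover the interval [y,q] used in the definition of e_α is one of the pieces of the decomposition of π, namely a negatively directed section of α∘π at Q_α(π)+1, and it is a positively directed section of α∘(e_α π) at Q_α(π)+1; every piece contained in [0,y] has the same type and the same level for e_α(π) as for π, and every piece contained in [q,1] has the same type for e_α(π) as for π, with level increased by 2. -/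
open Set

namespace MVPaper

variable {V : Type*} [AddCommGroup V] [Module ℝ V]

/-- `π` is piecewise linear (affine) on `[0,1]`. -/
def IsPWLinearOn (π : ℝ → V) : Prop :=
  ∃ (n : ℕ) (t : Fin (n + 1) → ℝ), Monotone t ∧ t 0 = 0 ∧ t (Fin.last n) = 1 ∧
    ∀ i : Fin n, ∃ a b : V, ∀ s ∈ Set.Icc (t i.castSucc) (t i.succ), π s = s • a + b

/-- A path: continuous piecewise linear with `π 0 = 0`. -/
def IsPath (π : ℝ → V) : Prop := π 0 = 0 ∧ IsPWLinearOn π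

/-- `t ∈ (0,1)` is a local minimum point of `f`. -/
def IsLocalMinPt (f : ℝ → ℝ) (t : ℝ) : Prop :=
  t ∈ Set.Ioo (0 : ℝ) 1 ∧ ∀ᶠ s in nhds t, f t ≤ f s

/-- `f` takes integer values at `0`, `1` and at local minimum points. -/
def IsIntegralFn (f : ℝ → ℝ) : Prop :=
  (∃ m : ℤ, f 0 = m) ∧ (∃ m : ℤ, f 1 = m) ∧ ∀ t, IsLocalMinPt f t → ∃ m : ℤ, f t = m

def IsZeroSectionAt (f : ℝ → ℝ) (m a b : ℝ) : Prop :=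
  0 ≤ a ∧ a < b ∧ b ≤ 1 ∧ ∀ t ∈ Set.Icc a b, f t = m

def IsPreStableAt (f : ℝ → ℝ) (m a b : ℝ) : Prop :=
  0 ≤ a ∧ a < b ∧ b ≤ 1 ∧ f a = m ∧ f b = m ∧ ∀ t ∈ Set.Ioo a b, m < f t

/-- A stable section: maximal among intervals on which `f` equals `m` at the ends and is
`> m` inside, for some integer level. -/
def IsStableSectionAt (f : ℝ → ℝ) (m a b : ℝ) : Prop :=
  IsPreStableAt f m a b ∧
    ∀ (m' : ℤ) (a' b' : ℝ), IsPreStableAt f (m' : ℝ) a' b' → a' ≤ a → b ≤ b' →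
      a' = a ∧ b' = b

def IsPosDirectedSectionAt (f : ℝ → ℝ) (m a b : ℝ) : Prop :=
  0 ≤ a ∧ a < b ∧ b ≤ 1 ∧ f a = m ∧ f b = m + 1 ∧
    ∀ t ∈ Set.Ioo a b, m < f t ∧ f t < m + 1

def IsNegDirectedSectionAt (f : ℝ → ℝ) (m a b : ℝ) : Prop :=
  0 ≤ a ∧ a < b ∧ b ≤ 1 ∧ f a = m ∧ f b = m - 1 ∧
    ∀ t ∈ Set.Ioo a b, m - 1 < f t ∧ f t < m

def IsSectionAt (f : ℝ → ℝ) (a b : ℝ) : Prop :=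
  ∃ m : ℤ, IsZeroSectionAt f (m : ℝ) a b ∨ IsStableSectionAt f (m : ℝ) a b ∨
    IsPosDirectedSectionAt f (m : ℝ) a b ∨ IsNegDirectedSectionAt f (m : ℝ) a b

/-- `a` and `b` are consecutive elements of the finite set `T`. -/
def Adjacent (T : Finset ℝ) (a b : ℝ) : Prop :=
  a ∈ T ∧ b ∈ T ∧ a < b ∧ ∀ c ∈ T, c ≤ a ∨ b ≤ c

/-- `T` is a subdivision of `[0,1]` each of whose consecutive intervals is a section of `f`. -/
def IsSectionDecomposition (f : ℝ → ℝ) (T : Finset ℝ) : Prop :=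
  (0 : ℝ) ∈ T ∧ (1 : ℝ) ∈ T ∧ (T : Set ℝ) ⊆ Set.Icc 0 1 ∧
    ∀ a b : ℝ, Adjacent T a b → IsSectionAt f a b

def NoTwoConsecutiveZeroSections (f : ℝ → ℝ) (T : Finset ℝ) : Prop :=
  ∀ a b c : ℝ, Adjacent T a b → Adjacent T b c →
    ¬ ((∃ m : ℤ, IsZeroSectionAt f (m : ℝ) a b) ∧ (∃ m : ℤ, IsZeroSectionAt f (m : ℝ) b c))

/-- `Q_β(π) = min β∘π` on `[0,1]`. -/
noncomputable def Qval (β : V →ₗ[ℝ] ℝ) (π : ℝ → V) : ℝ :=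
  sInf ((fun t => β (π t)) '' Set.Icc (0 : ℝ) 1)

/-- The reflection `s_β(v) = v - β(v)β^∨`. -/
def sRefl (β : V →ₗ[ℝ] ℝ) (βv : V) (v : V) : V := v - β v • βv

/-- `q`, the first time the minimum of `β∘π` is attained. -/
noncomputable def qTime (β : V →ₗ[ℝ] ℝ) (π : ℝ → V) : ℝ :=
  sInf {t | t ∈ Set.Icc (0 : ℝ) 1 ∧ β (π t) = Qval β π}

/-- `y`, the last time before `q` where `β∘π = Q+1`. -/
noncomputable def yTime (β : V →ₗ[ℝ] ℝ) (π : ℝ → V) : ℝ :=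
  sSup {t | t ∈ Set.Icc (0 : ℝ) 1 ∧ t < qTime β π ∧ β (π t) = Qval β π + 1}

/-- Littelmann raising operator. -/
noncomputable def eOp (β : V →ₗ[ℝ] ℝ) (βv : V) (π : ℝ → V) : ℝ → V := fun t =>
  if t ≤ yTime β π then π t
  else if t ≤ qTime β π then π (yTime β π) + sRefl β βv (π t - π (yTime β π))
  else π t + βv

/-- `p`, the last time the minimum of `β∘π` is attained. -/
noncomputable def pTime (β : V →ₗ[ℝ] ℝ) (π : ℝ → V) : ℝ :=
  sSup {t | t ∈ Set.Icc (0 : ℝ) 1 ∧ β (π t) = Qval β π}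

/-- `x`, the first time after `p` where `β∘π = Q+1`. -/
noncomputable def xTime (β : V →ₗ[ℝ] ℝ) (π : ℝ → V) : ℝ :=
  sInf {t | t ∈ Set.Icc (0 : ℝ) 1 ∧ pTime β π < t ∧ β (π t) = Qval β π + 1}

/-- Littelmann lowering operator. -/
noncomputable def fOp (β : V →ₗ[ℝ] ℝ) (βv : V) (π : ℝ → V) : ℝ → V := fun t =>
  if t ≤ pTime β π then π t
  else if t ≤ xTime β π then π (pTime β π) + sRefl β βv (π t - π (pTime β π))
  else π t - βv

noncomputable def phiVal (β : V →ₗ[ℝ] ℝ) (π : ℝ → V) : ℝ := β (π 1) - Qval β π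

/-- `e_β^{max}`: iterate `e_β` while `Q_β ≤ -1`, i.e. `ε_β(π)` many times. -/
noncomputable def eMax (β : V →ₗ[ℝ] ℝ) (βv : V) (π : ℝ → V) : ℝ → V :=
  (eOp β βv)^[⌊-(Qval β π)⌋₊] π

/-- `f_β^{max}`: iterate `f_β` while `φ_β ≥ 1`, i.e. `φ_β(π)` many times. -/
noncomputable def fMax (β : V →ₗ[ℝ] ℝ) (βv : V) (π : ℝ → V) : ℝ → V :=
  (fOp β βv)^[⌊phiVal β π⌋₊] π


lemma aux_exists_piece {n : ℕ} {t : Fin (n+1) → ℝ} (hmono : Monotone t) (ht0 : t 0 = 0)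
    {s : ℝ} (hs0 : 0 ≤ s) (hs1 : s < 1) (htl : t (Fin.last n) = 1) :
    ∃ i : Fin n, t i.castSucc ≤ s ∧ s < t i.succ := by
  classical
  set S : Finset (Fin (n+1)) := Finset.univ.filter (fun j => t j ≤ s) with hS
  have h0S : (0 : Fin (n+1)) ∈ S := by
    simp [hS, ht0, hs0]
  have hne : S.Nonempty := ⟨0, h0S⟩
  set j := S.max' hne with hj
  have hjS : j ∈ S := S.max'_mem hne
  have hjle : t j ≤ s := by simpa [hS] using hjS
  have hjne : j ≠ Fin.last n := by
    intro h
    rw [h, htl] at hjle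
    linarith
  have hjlt : (j : ℕ) < n := by
    have h1 := j.isLt
    have h2 : (j : ℕ) ≠ n := fun h => hjne (by ext; simpa using h)
    omega
  refine ⟨⟨j.val, hjlt⟩, ?_, ?_⟩
  · have : (⟨j.val, hjlt⟩ : Fin n).castSucc = j := by ext; rfl
    rw [this]; exact hjle
  · by_contra h
    push_neg at h
    have hmem : (⟨j.val, hjlt⟩ : Fin n).succ ∈ S := by
      simp only [hS, Finset.mem_filter, Finset.mem_univ, true_and]; exact h
    have := S.le_max' _ hmem
    rw [← hj] at this
    have : ((⟨j.val, hjlt⟩ : Fin n).succ : ℕ) ≤ (j : ℕ) := this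
    simp at this

lemma aux_npos {n : ℕ} {t : Fin (n+1) → ℝ} (ht0 : t 0 = 0) (htl : t (Fin.last n) = 1) :
    0 < n := by
  rcases Nat.eq_zero_or_pos n with h | h
  · subst h
    have : t (Fin.last 0) = t 0 := rfl
    rw [htl, ht0] at this
    norm_num at this
  · exact h

lemma aux_cover {n : ℕ} {t : Fin (n+1) → ℝ} (hmono : Monotone t) (ht0 : t 0 = 0)
    (htl : t (Fin.last n) = 1) :
    Set.Icc (0:ℝ) 1 ⊆ ⋃ i : Fin n, Set.Icc (t i.castSucc) (t i.succ) := by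
  intro s hs
  rcases lt_or_eq_of_le hs.2 with h1 | h1
  · obtain ⟨i, h2, h3⟩ := aux_exists_piece hmono ht0 hs.1 h1 htl
    exact Set.mem_iUnion.2 ⟨i, h2, h3.le⟩
  · have hn := aux_npos ht0 htl
    refine Set.mem_iUnion.2 ⟨⟨n-1, by omega⟩, ?_, ?_⟩
    · rw [h1, ← htl]
      exact hmono (by simp [Fin.le_def])
    · have : (⟨n-1, by omega⟩ : Fin n).succ = Fin.last n := by ext; simp; omega
      rw [this, htl, h1]

lemma pwl_continuousOn {V : Type*} [AddCommGroup V] [Module ℝ V]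
    (β : V →ₗ[ℝ] ℝ) {π : ℝ → V} (h : IsPWLinearOn π) :
    ContinuousOn (fun s => β (π s)) (Set.Icc (0:ℝ) 1) := by
  obtain ⟨n, t, hmono, ht0, htl, hp⟩ := h
  refine ContinuousOn.mono ?_ (aux_cover hmono ht0 htl)
  refine (locallyFinite_of_finite _).continuousOn_iUnion (fun i => isClosed_Icc) ?_
  intro i
  obtain ⟨a, b, hab⟩ := hp i
  refine ContinuousOn.congr (f := fun s : ℝ => s * β a + β b) (by fun_prop) ?_
  intro s hs
  simp only [hab s hs]
  simp [smul_eq_mul]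

lemma aux_no_int {mQ m : ℤ} (h1 : (mQ:ℝ) < (m:ℝ)) (h2 : (m:ℝ) < (mQ:ℝ) + 1) : False := by
  have g1 : mQ < m := by exact_mod_cast h1
  have g2 : (m:ℝ) < ((mQ + 1 : ℤ) : ℝ) := by push_cast; linarith
  have g3 : m < mQ + 1 := by exact_mod_cast g2
  omega

structure CoreFacts {V : Type*} [AddCommGroup V] [Module ℝ V]
    (β : V →ₗ[ℝ] ℝ) (π : ℝ → V) : Prop where
  hmin : ∀ t ∈ Set.Icc (0:ℝ) 1, Qval β π ≤ β (π t)
  hq01 : qTime β π ∈ Set.Icc (0:ℝ) 1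
  hfq : β (π (qTime β π)) = Qval β π
  hqmin : ∀ t ∈ Set.Icc (0:ℝ) 1, β (π t) = Qval β π → qTime β π ≤ t
  hq0 : 0 < qTime β π
  hQint : ∃ m : ℤ, Qval β π = (m : ℝ)
  hy01 : yTime β π ∈ Set.Icc (0:ℝ) 1
  hfy : β (π (yTime β π)) = Qval β π + 1
  hyq : yTime β π < qTime β π
  hymax : ∀ t ∈ Set.Icc (0:ℝ) 1, t < qTime β π → β (π t) = Qval β π + 1 → t ≤ yTime β π
  hlt : ∀ t, 0 ≤ t → t < qTime β π → Qval β π < β (π t)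
  hmid : ∀ t ∈ Set.Ioo (yTime β π) (qTime β π), β (π t) < Qval β π + 1
  hleft : ∀ t ∈ Set.Icc (0:ℝ) (yTime β π), Qval β π + 1 ≤ β (π t)
  hnomax : ∀ u ∈ Set.Ioo (yTime β π) (qTime β π), ¬ (∀ᶠ s in nhds u, β (π s) ≤ β (π u))

lemma coreFacts {V : Type*} [AddCommGroup V] [Module ℝ V]
    (β : V →ₗ[ℝ] ℝ) (π : ℝ → V) (hπ : IsPath π)
    (hint : IsIntegralFn (fun t => β (π t))) (hQ : Qval β π ≤ -1) :
    CoreFacts β π := by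
  classical
  set f : ℝ → ℝ := fun t => β (π t) with hf
  have hcont : ContinuousOn f (Set.Icc 0 1) := pwl_continuousOn β hπ.2
  have hf0 : f 0 = 0 := by simp [hf, hπ.1]
  have h01 : (0:ℝ) ∈ Set.Icc (0:ℝ) 1 := by norm_num
  obtain ⟨z, hz, hzmin⟩ := isCompact_Icc.exists_isMinOn ⟨0, h01⟩ hcont
  have hzmin' : ∀ t ∈ Set.Icc (0:ℝ) 1, f z ≤ f t := fun t ht => hzmin ht
  have hQzA : Qval β π ≤ f z := csInf_le ⟨f z, fun x ⟨u, hu, hux⟩ => hux ▸ hzmin' u hu⟩ ⟨z, hz, rfl⟩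
  have hQzB : f z ≤ Qval β π := le_csInf ⟨f 0, 0, h01, rfl⟩ (fun x ⟨u, hu, hux⟩ => hux ▸ hzmin' u hu)
  have hQz : Qval β π = f z := le_antisymm hQzA hQzB
  set Q := Qval β π with hQdef
  have hmin : ∀ t ∈ Set.Icc (0:ℝ) 1, Q ≤ f t := fun t ht => hQz ▸ hzmin' t ht
  -- the set defining qTime
  set Sq : Set ℝ := {t | t ∈ Set.Icc (0:ℝ) 1 ∧ β (π t) = Qval β π} with hSq
  have hSqeq : Sq = Set.Icc (0:ℝ) 1 ∩ f ⁻¹' {Q} := by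
    ext u; simp [hSq, hf, Set.mem_setOf_eq, and_comm]
    tauto
  have hSqcl : IsClosed Sq := by
    rw [hSqeq]
    exact hcont.preimage_isClosed_of_isClosed isClosed_Icc isClosed_singleton
  have hzSq : z ∈ Sq := ⟨hz, hQz.symm⟩
  have hSqbdd : BddBelow Sq := ⟨0, fun x hx => hx.1.1⟩
  have hqmem : qTime β π ∈ Sq := hSqcl.csInf_mem ⟨z, hzSq⟩ hSqbdd
  have hqmin : ∀ t ∈ Set.Icc (0:ℝ) 1, β (π t) = Qval β π → qTime β π ≤ t :=
    fun t ht hft => csInf_le hSqbdd ⟨ht, hft⟩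
  set q := qTime β π with hqdef
  have hq01 : q ∈ Set.Icc (0:ℝ) 1 := hqmem.1
  have hfq : f q = Q := hqmem.2
  have hq0 : 0 < q := by
    rcases lt_or_eq_of_le hq01.1 with h | h
    · exact h
    · exfalso; rw [← h] at hfq; rw [hf0] at hfq; linarith
  have hlt : ∀ t, 0 ≤ t → t < q → Q < f t := by
    intro t ht0 htq
    have ht : t ∈ Set.Icc (0:ℝ) 1 := ⟨ht0, htq.le.trans hq01.2⟩
    rcases lt_or_eq_of_le (hmin t ht) with h | h
    · exact h
    · exact absurd (hqmin t ht h.symm) (not_le.2 htq)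
  have hQint : ∃ m : ℤ, Q = (m : ℝ) := by
    rcases eq_or_lt_of_le hq01.2 with h | h
    · obtain ⟨m, hm⟩ := hint.2.1
      exact ⟨m, by rw [← hfq, h]; exact hm⟩
    · have hloc : IsLocalMinPt f q := by
        refine ⟨⟨hq0, h⟩, ?_⟩
        filter_upwards [isOpen_Ioo.mem_nhds (⟨hq0, h⟩ : q ∈ Set.Ioo (0:ℝ) 1)] with s hs
        rw [hfq]
        exact hmin s (Set.Ioo_subset_Icc_self hs)
      obtain ⟨m, hm⟩ := hint.2.2 q hloc
      exact ⟨m, by rw [← hfq]; exact hm⟩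
  -- the set defining yTime
  set Sy : Set ℝ := {t | t ∈ Set.Icc (0:ℝ) 1 ∧ t < qTime β π ∧ β (π t) = Qval β π + 1} with hSy
  have hQQ1 : Q ≤ Q + 1 := by linarith
  have hivt := intermediate_value_Icc' hq01.1 (hcont.mono (Set.Icc_subset_Icc le_rfl hq01.2))
  have hwmem : Q + 1 ∈ Set.Icc (f q) (f 0) := by rw [hfq, hf0]; exact ⟨hQQ1, by linarith⟩
  obtain ⟨w, hw, hfw⟩ := hivt hwmem
  have hwq : w < q := by
    rcases lt_or_eq_of_le hw.2 with h | h
    · exact h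
    · exfalso; rw [h] at hfw; rw [hfq] at hfw; linarith
  have hwSy : w ∈ Sy := ⟨⟨hw.1, hw.2.trans hq01.2⟩, hwq, hfw⟩
  have hSybdd : BddAbove Sy := ⟨q, fun x hx => hx.2.1.le⟩
  have hycl : yTime β π ∈ closure Sy := csSup_mem_closure ⟨w, hwSy⟩ hSybdd
  set C : Set ℝ := (Set.Icc (0:ℝ) 1 ∩ f ⁻¹' {Q + 1}) ∩ Set.Iic q with hC
  have hCcl : IsClosed C :=
    (hcont.preimage_isClosed_of_isClosed isClosed_Icc isClosed_singleton).inter isClosed_Iic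
  have hSyC : Sy ⊆ C := fun x hx => ⟨⟨hx.1, hx.2.2⟩, hx.2.1.le⟩
  have hyC : yTime β π ∈ C := hCcl.closure_subset ((closure_mono hSyC) hycl)
  set y := yTime β π with hydef
  have hy01 : y ∈ Set.Icc (0:ℝ) 1 := hyC.1.1
  have hfy : f y = Q + 1 := hyC.1.2
  have hyq : y < q := by
    rcases lt_or_eq_of_le (Set.mem_Iic.1 hyC.2) with h | h
    · exact h
    · exfalso; rw [h] at hfy; rw [hfq] at hfy; linarith
  have hymax : ∀ t ∈ Set.Icc (0:ℝ) 1, t < q → β (π t) = Qval β π + 1 → t ≤ y :=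
    fun t ht htq hft => le_csSup hSybdd ⟨ht, htq, hft⟩
  have hmid : ∀ t ∈ Set.Ioo y q, f t < Q + 1 := by
    intro t ht
    by_contra h
    push_neg at h
    have ht01 : t ∈ Set.Icc (0:ℝ) 1 := ⟨hy01.1.trans ht.1.le, ht.2.le.trans hq01.2⟩
    have hivt2 := intermediate_value_Icc' ht.2.le
      (hcont.mono (Set.Icc_subset_Icc ht01.1 hq01.2))
    have : Q + 1 ∈ Set.Icc (f q) (f t) := by rw [hfq]; exact ⟨hQQ1, h⟩
    obtain ⟨t', ht', hft'⟩ := hivt2 this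
    have ht'q : t' < q := by
      rcases lt_or_eq_of_le ht'.2 with h2 | h2
      · exact h2
      · exfalso; rw [h2] at hft'; rw [hfq] at hft'; linarith
    have : t' ≤ y := hymax t' ⟨ht01.1.trans ht'.1, ht'.2.trans hq01.2⟩ ht'q hft'
    linarith [ht.1, ht'.1]
  obtain ⟨mQ, hmQ⟩ := id hQint
  have hleft : ∀ t ∈ Set.Icc (0:ℝ) y, Q + 1 ≤ f t := by
    intro t ht
    by_contra hcon
    push_neg at hcon
    have hy1 : y ≤ 1 := hy01.2
    obtain ⟨z2, hz2, hz2min⟩ := isCompact_Icc.exists_isMinOn (Set.nonempty_Icc.2 hy01.1)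
      (hcont.mono (Set.Icc_subset_Icc le_rfl hy1))
    have hz2min' : ∀ s ∈ Set.Icc (0:ℝ) y, f z2 ≤ f s := fun s hs => hz2min hs
    have hz2lt : f z2 < Q + 1 := lt_of_le_of_lt (hz2min' t ht) hcon
    have hz20 : z2 ≠ 0 := by intro h; rw [h, hf0] at hz2lt; linarith
    have hz2y : z2 ≠ y := by intro h; rw [h, hfy] at hz2lt; linarith
    have hz2mem : z2 ∈ Set.Ioo (0:ℝ) y :=
      ⟨lt_of_le_of_ne hz2.1 (Ne.symm hz20), lt_of_le_of_ne hz2.2 hz2y⟩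
    have hloc : IsLocalMinPt f z2 := by
      refine ⟨⟨hz2mem.1, lt_of_lt_of_le hz2mem.2 (hy01.2)⟩, ?_⟩
      filter_upwards [isOpen_Ioo.mem_nhds hz2mem] with s hs
      exact hz2min' s (Set.Ioo_subset_Icc_self hs)
    obtain ⟨m, hm⟩ := hint.2.2 z2 hloc
    have h1 : Q < f z2 := hlt z2 hz2.1 (lt_trans hz2mem.2 hyq)
    exact aux_no_int (mQ := mQ) (m := m) (by rw [← hm, ← hmQ]; exact h1)
      (by rw [← hm, ← hmQ]; exact hz2lt)
  have hnomax : ∀ u ∈ Set.Ioo y q, ¬ (∀ᶠ s in nhds u, f s ≤ f u) := by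
    intro u hu hev
    have hu01 : u ∈ Set.Ioo (0:ℝ) 1 :=
      ⟨lt_of_le_of_lt hy01.1 hu.1, lt_of_lt_of_le hu.2 hq01.2⟩
    have hyu : y ≤ u := hu.1.le
    obtain ⟨z3, hz3, hz3min⟩ := isCompact_Icc.exists_isMinOn (Set.nonempty_Icc.2 hyu)
      (hcont.mono (Set.Icc_subset_Icc hy01.1 hu01.2.le))
    have hz3min' : ∀ s ∈ Set.Icc y u, f z3 ≤ f s := fun s hs => hz3min hs
    have hfzu : f z3 ≤ f u := hz3min' u ⟨hyu, le_rfl⟩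
    have hz3y : z3 ≠ y := by
      intro h
      rw [h, hfy] at hfzu
      exact absurd (hmid u hu) (not_lt.2 hfzu)
    -- a point in (y,u] which is a local min with non-integer value
    have key : ∀ v, v ∈ Set.Ioo y u → f v ≤ f u → (∀ s ∈ Set.Icc y u, f v ≤ f s) → False := by
      intro v hv hvu hvmin
      have hloc : IsLocalMinPt f v := by
        refine ⟨⟨lt_of_le_of_lt hy01.1 hv.1, lt_trans hv.2 hu01.2⟩, ?_⟩
        filter_upwards [isOpen_Ioo.mem_nhds hv] with s hs
        exact hvmin s (Set.Ioo_subset_Icc_self hs)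
      obtain ⟨m, hm⟩ := hint.2.2 v hloc
      have h1 : Q < f v := hlt v (hy01.1.trans hv.1.le) (lt_trans hv.2 hu.2)
      have h2 : f v < Q + 1 := lt_of_le_of_lt hvu (hmid u hu)
      exact aux_no_int (mQ := mQ) (m := m) (by rw [← hm, ← hmQ]; exact h1)
        (by rw [← hm, ← hmQ]; exact h2)
    rcases lt_or_eq_of_le hz3.2 with h | h
    · exact key z3 ⟨lt_of_le_of_ne hz3.1 (Ne.symm hz3y), h⟩ hfzu hz3min'
    · -- z3 = u : all of [y,u) has f > f u is not needed; use the eventual bound to find s₀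
      obtain ⟨ε, hε, hball⟩ := Metric.eventually_nhds_iff.1 hev
      set s₀ := max ((y + u) / 2) (u - ε / 2) with hs₀
      have hs₀y : y < s₀ := lt_max_iff.2 (Or.inl (by linarith [hu.1]))
      have hs₀u : s₀ < u := max_lt (by linarith [hu.1]) (by linarith)
      have hdist : dist s₀ u < ε := by
        rw [Real.dist_eq, abs_lt]
        constructor
        · have : u - ε / 2 ≤ s₀ := le_max_right _ _
          linarith
        · linarith
      have h1 : f s₀ ≤ f u := hball hdist
      have h2 : f u ≤ f s₀ := by
        have := hz3min' s₀ ⟨hs₀y.le, hs₀u.le⟩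
        rw [h] at this
        linarith
      have heq : f s₀ = f u := le_antisymm h1 h2
      refine key s₀ ⟨hs₀y, hs₀u⟩ heq.le ?_
      intro s hs
      rw [heq, ← h]  -- f u = f z3
      exact hz3min' s hs
  exact ⟨hmin, hq01, hfq, hqmin, hq0, hQint, hy01, hfy, hyq, hymax, hlt, hmid, hleft, hnomax⟩

section EOpBasic

variable {V : Type*} [AddCommGroup V] [Module ℝ V]
variable {β : V →ₗ[ℝ] ℝ} {βv : V} {π : ℝ → V}

lemma sRefl_zero : sRefl β βv (0 : V) = 0 := by simp [sRefl]

lemma sRefl_add (v w : V) : sRefl β βv (v + w) = sRefl β βv v + sRefl β βv w := by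
  simp only [sRefl, map_add, add_smul]; abel

lemma sRefl_smul (r : ℝ) (v : V) : sRefl β βv (r • v) = r • sRefl β βv v := by
  simp only [sRefl, map_smul, smul_smul, smul_sub, smul_eq_mul]

lemma eOp_left (t : ℝ) (ht : t ≤ yTime β π) : eOp β βv π t = π t := if_pos ht

lemma eOp_midv (hc : CoreFacts β π) (t : ℝ) (h1 : yTime β π ≤ t) (h2 : t ≤ qTime β π) :
    eOp β βv π t = π (yTime β π) + sRefl β βv (π t - π (yTime β π)) := by
  unfold eOp
  by_cases h : t ≤ yTime β π
  · have : t = yTime β π := le_antisymm h h1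
    rw [if_pos h, this]
    simp [sRefl_zero (β := β) (βv := βv)]
  · rw [if_neg h, if_pos h2]

lemma eOp_rightv (hc : CoreFacts β π) (t : ℝ) (h1 : qTime β π ≤ t) :
    eOp β βv π t = π t + βv := by
  unfold eOp
  have hy : ¬ t ≤ yTime β π := not_le.2 (lt_of_lt_of_le hc.hyq h1)
  rw [if_neg hy]
  by_cases h : t ≤ qTime β π
  · have hq : t = qTime β π := le_antisymm h h1
    rw [if_pos h, hq]
    have hb : β (π (qTime β π) - π (yTime β π)) = -1 := by
      rw [map_sub, hc.hfq, hc.hfy]; ring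
    simp only [sRefl, hb, neg_smul, one_smul, sub_neg_eq_add]
    abel
  · rw [if_neg h]

lemma eOp_beta_left (t : ℝ) (ht : t ≤ yTime β π) :
    β (eOp β βv π t) = β (π t) := by rw [eOp_left t ht]

lemma eOp_beta_mid (hc : CoreFacts β π) (hβ : β βv = 2) (t : ℝ)
    (h1 : yTime β π ≤ t) (h2 : t ≤ qTime β π) :
    β (eOp β βv π t) = 2 * (Qval β π + 1) - β (π t) := by
  rw [eOp_midv hc t h1 h2]
  simp only [sRefl, map_add, map_sub, map_smul, smul_eq_mul, hβ, hc.hfy]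
  ring

lemma eOp_beta_right (hc : CoreFacts β π) (hβ : β βv = 2) (t : ℝ) (h1 : qTime β π ≤ t) :
    β (eOp β βv π t) = β (π t) + 2 := by
  rw [eOp_rightv hc t h1, map_add, hβ]

lemma eOp_beta_y (hc : CoreFacts β π) : β (eOp β βv π (yTime β π)) = Qval β π + 1 := by
  rw [eOp_beta_left _ le_rfl, hc.hfy]

lemma eOp_beta_q (hc : CoreFacts β π) (hβ : β βv = 2) :
    β (eOp β βv π (qTime β π)) = Qval β π + 2 := by
  rw [eOp_beta_right hc hβ _ le_rfl, hc.hfq]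

lemma eOp_ge (hc : CoreFacts β π) (hβ : β βv = 2) :
    ∀ t ∈ Set.Icc (0:ℝ) 1, Qval β π + 1 ≤ β (eOp β βv π t) := by
  intro t ht
  rcases le_or_gt t (yTime β π) with h | h
  · rw [eOp_beta_left t h]
    exact hc.hleft t ⟨ht.1, h⟩
  rcases le_or_gt t (qTime β π) with h2 | h2
  · rw [eOp_beta_mid hc hβ t h.le h2]
    have : β (π t) ≤ Qval β π + 1 := by
      rcases lt_or_eq_of_le h2 with h3 | h3
      · exact (hc.hmid t ⟨h, h3⟩).le
      · rw [h3, hc.hfq]; linarith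
    linarith
  · rw [eOp_beta_right hc hβ t h2.le]
    have := hc.hmin t ht
    linarith

lemma eOp_Qval (hc : CoreFacts β π) (hβ : β βv = 2) :
    Qval β (eOp β βv π) = Qval β π + 1 := by
  refine le_antisymm ?_ ?_
  · refine csInf_le ⟨Qval β π + 1, ?_⟩ ⟨yTime β π, hc.hy01, eOp_beta_y hc⟩
    rintro x ⟨u, hu, rfl⟩
    exact eOp_ge hc hβ u hu
  · refine le_csInf ⟨β (eOp β βv π 0), 0, by norm_num, rfl⟩ ?_
    rintro x ⟨u, hu, rfl⟩
    exact eOp_ge hc hβ u hu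

lemma eOp_integral (hc : CoreFacts β π) (hβ : β βv = 2)
    (hint : IsIntegralFn (fun t => β (π t))) :
    IsIntegralFn (fun t => β (eOp β βv π t)) := by
  obtain ⟨mQ, hmQ⟩ := hc.hQint
  refine ⟨?_, ?_, ?_⟩
  · obtain ⟨m, hm⟩ := hint.1
    exact ⟨m, by show β (eOp β βv π 0) = (m:ℝ); rw [eOp_beta_left 0 hc.hy01.1]; exact hm⟩
  · obtain ⟨m, hm⟩ := hint.2.1
    refine ⟨m + 2, ?_⟩
    show β (eOp β βv π 1) = ((m + 2 : ℤ) : ℝ)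
    rw [eOp_beta_right hc hβ 1 hc.hq01.2]
    push_cast
    rw [show β (π 1) = (m:ℝ) from hm]
  · rintro u ⟨hu01, hev⟩
    rcases lt_trichotomy u (yTime β π) with h | h | h
    · -- before y : local min of f
      have hloc : IsLocalMinPt (fun t => β (π t)) u := by
        refine ⟨hu01, ?_⟩
        filter_upwards [hev, Iio_mem_nhds h] with s hs hs2
        rw [eOp_beta_left u h.le] at hs
        rw [eOp_beta_left s (le_of_lt hs2)] at hs
        exact hs
      obtain ⟨m, hm⟩ := hint.2.2 u hloc
      exact ⟨m, by show β (eOp β βv π u) = (m:ℝ); rw [eOp_beta_left u h.le]; exact hm⟩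
    · refine ⟨mQ + 1, ?_⟩
      show β (eOp β βv π u) = ((mQ + 1 : ℤ) : ℝ)
      rw [h, eOp_beta_y hc, hmQ]; push_cast; ring
    rcases lt_trichotomy u (qTime β π) with h2 | h2 | h2
    · -- impossible: would give a local max of f in (y,q)
      exfalso
      refine hc.hnomax u ⟨h, h2⟩ ?_
      filter_upwards [hev, isOpen_Ioo.mem_nhds (⟨h, h2⟩ : u ∈ Set.Ioo (yTime β π) (qTime β π))]
        with s hs hs2
      rw [eOp_beta_mid hc hβ u h.le h2.le, eOp_beta_mid hc hβ s hs2.1.le hs2.2.le] at hs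
      linarith
    · refine ⟨mQ + 2, ?_⟩
      show β (eOp β βv π u) = ((mQ + 2 : ℤ) : ℝ)
      rw [h2, eOp_beta_q hc hβ, hmQ]; push_cast; ring
    · have hloc : IsLocalMinPt (fun t => β (π t)) u := by
        refine ⟨hu01, ?_⟩
        filter_upwards [hev, Ioi_mem_nhds h2] with s hs hs2
        rw [eOp_beta_right hc hβ u h2.le, eOp_beta_right hc hβ s (le_of_lt hs2)] at hs
        linarith
      obtain ⟨m, hm⟩ := hint.2.2 u hloc
      refine ⟨m + 2, ?_⟩
      show β (eOp β βv π u) = ((m + 2 : ℤ) : ℝ)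
      rw [eOp_beta_right hc hβ u h2.le]
      push_cast
      rw [show β (π u) = (m:ℝ) from hm]

end EOpBasic

lemma eOp_pwl {V : Type*} [AddCommGroup V] [Module ℝ V]
    {β : V →ₗ[ℝ] ℝ} {βv : V} {π : ℝ → V}
    (hc : CoreFacts β π) (hpwl : IsPWLinearOn π) : IsPWLinearOn (eOp β βv π) := by
  classical
  obtain ⟨n, t, hmono, ht0, htl, hp⟩ := hpwl
  set y := yTime β π with hydef
  set q := qTime β π with hqdef
  set T' : Finset ℝ := (Finset.image t Finset.univ) ∪ {y, q} with hT'
  have hyT : y ∈ T' := by simp [hT']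
  have hqT : q ∈ T' := by simp [hT']
  have htT : ∀ j, t j ∈ T' := by
    intro j
    simp only [hT', Finset.mem_union, Finset.mem_image, Finset.mem_univ, true_and]
    exact Or.inl ⟨j, rfl⟩
  have hmem01 : ∀ x ∈ T', x ∈ Set.Icc (0:ℝ) 1 := by
    intro x hx
    simp only [hT', Finset.mem_union, Finset.mem_image, Finset.mem_univ, true_and,
      Finset.mem_insert, Finset.mem_singleton] at hx
    rcases hx with ⟨j, rfl⟩ | hx | hx
    · constructor
      · rw [← ht0]; exact hmono (Fin.zero_le j)
      · rw [← htl]; exact hmono (Fin.le_last j)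
    · rw [hx]; exact hc.hy01
    · rw [hx]; exact hc.hq01
  have hne : T'.Nonempty := ⟨y, hyT⟩
  set N : ℕ := T'.card - 1 with hN
  have hcard : T'.card = N + 1 := by
    have := Finset.card_pos.2 hne
    omega
  set u : Fin (N+1) → ℝ := fun i => T'.orderEmbOfFin hcard i with hu
  have husm : StrictMono u := (T'.orderEmbOfFin hcard).strictMono
  have humem : ∀ i, u i ∈ T' := fun i => T'.orderEmbOfFin_mem hcard i
  have husurj : ∀ x ∈ T', ∃ k, u k = x := by
    intro x hx
    have : x ∈ Set.range (T'.orderEmbOfFin hcard) := by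
      rw [Finset.range_orderEmbOfFin]; exact hx
    exact this
  have hu0 : u 0 = 0 := by
    have h0T : (0:ℝ) ∈ T' := by rw [← ht0]; exact htT 0
    obtain ⟨k, hk⟩ := husurj 0 h0T
    refine le_antisymm ?_ (hmem01 _ (humem 0)).1
    rw [← hk]
    exact husm.monotone (Fin.zero_le k)
  have hul : u (Fin.last N) = 1 := by
    have h1T : (1:ℝ) ∈ T' := by rw [← htl]; exact htT (Fin.last n)
    obtain ⟨k, hk⟩ := husurj 1 h1T
    refine le_antisymm (hmem01 _ (humem _)).2 ?_
    rw [← hk]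
    exact husm.monotone (Fin.le_last k)
  refine ⟨N, u, husm.monotone, hu0, hul, ?_⟩
  intro i
  set c := u i.castSucc with hc'
  set d := u i.succ with hd'
  have hcd : c < d := husm (show i.castSucc < i.succ from Fin.castSucc_lt_succ)
  have hbetween : ∀ x ∈ T', ¬ (c < x ∧ x < d) := by
    rintro x hx ⟨h1, h2⟩
    obtain ⟨k, hk⟩ := husurj x hx
    rw [← hk] at h1 h2
    have hk1 : (i : ℕ) < (k : ℕ) := by
      simpa [Fin.lt_def] using husm.lt_iff_lt.1 h1
    have hk2 : (k : ℕ) < (i : ℕ) + 1 := by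
      simpa [Fin.lt_def] using husm.lt_iff_lt.1 h2
    omega
  have hc01 : c ∈ Set.Icc (0:ℝ) 1 := hmem01 _ (humem _)
  have hd01 : d ∈ Set.Icc (0:ℝ) 1 := hmem01 _ (humem _)
  have hc1 : c < 1 := lt_of_lt_of_le hcd hd01.2
  obtain ⟨j, hj1, hj2⟩ := aux_exists_piece hmono ht0 hc01.1 hc1 htl
  have hdj : d ≤ t j.succ := by
    rcases le_or_gt d (t j.succ) with h | h
    · exact h
    · exact absurd ⟨hj2, h⟩ (hbetween _ (htT j.succ))
  have hsub : Set.Icc c d ⊆ Set.Icc (t j.castSucc) (t j.succ) :=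
    Set.Icc_subset_Icc hj1 hdj
  obtain ⟨a, b, hab⟩ := hp j
  have hy' : y ≤ c ∨ d ≤ y := by
    rcases le_or_gt y c with h | h
    · exact Or.inl h
    rcases le_or_gt d y with h2 | h2
    · exact Or.inr h2
    · exact absurd ⟨h, h2⟩ (hbetween y hyT)
  have hq' : q ≤ c ∨ d ≤ q := by
    rcases le_or_gt q c with h | h
    · exact Or.inl h
    rcases le_or_gt d q with h2 | h2
    · exact Or.inr h2
    · exact absurd ⟨h, h2⟩ (hbetween q hqT)
  rcases hy' with hy1 | hy1
  · rcases hq' with hq1 | hq1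
    · -- q ≤ c : translated piece
      refine ⟨a, b + βv, ?_⟩
      intro s hs
      rw [eOp_rightv hc s (le_trans hq1 hs.1), hab s (hsub hs)]
      abel
    · -- y ≤ c, d ≤ q : reflected piece
      refine ⟨sRefl β βv a, π y + sRefl β βv (b - π y), ?_⟩
      intro s hs
      rw [eOp_midv hc s (le_trans hy1 hs.1) (le_trans hs.2 hq1)]
      have : π s - π y = s • a + (b - π y) := by rw [hab s (hsub hs)]; abel
      rw [this, sRefl_add, sRefl_smul]
      abel
  · -- d ≤ y : unchanged piece
    refine ⟨a, b, ?_⟩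
    intro s hs
    rw [eOp_left s (le_trans hs.2 hy1), hab s (hsub hs)]

lemma eOp_isPath {V : Type*} [AddCommGroup V] [Module ℝ V]
    {β : V →ₗ[ℝ] ℝ} {βv : V} {π : ℝ → V}
    (hc : CoreFacts β π) (hπ : IsPath π) : IsPath (eOp β βv π) := by
  refine ⟨?_, eOp_pwl hc hπ.2⟩
  rw [eOp_left 0 hc.hy01.1, hπ.1]

section Congr

variable {f g : ℝ → ℝ} {m a b : ℝ}

lemma zero_congr (h : ∀ t ∈ Set.Icc a b, g t = f t) :
    IsZeroSectionAt f m a b ↔ IsZeroSectionAt g m a b := by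
  unfold IsZeroSectionAt
  refine and_congr_right fun _ => and_congr_right fun _ => and_congr_right fun _ => ?_
  exact forall₂_congr fun t ht => by rw [h t ht]

lemma prestable_congr (h : ∀ t ∈ Set.Icc a b, g t = f t) (hab : a ≤ b) :
    IsPreStableAt f m a b ↔ IsPreStableAt g m a b := by
  unfold IsPreStableAt
  rw [h a (Set.left_mem_Icc.2 hab), h b (Set.right_mem_Icc.2 hab)]
  refine and_congr_right fun _ => and_congr_right fun _ => and_congr_right fun _ =>
    and_congr_right fun _ => and_congr_right fun _ => ?_
  exact forall₂_congr fun t ht => by rw [h t (Set.Ioo_subset_Icc_self ht)]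

lemma posdir_congr (h : ∀ t ∈ Set.Icc a b, g t = f t) (hab : a ≤ b) :
    IsPosDirectedSectionAt f m a b ↔ IsPosDirectedSectionAt g m a b := by
  unfold IsPosDirectedSectionAt
  rw [h a (Set.left_mem_Icc.2 hab), h b (Set.right_mem_Icc.2 hab)]
  refine and_congr_right fun _ => and_congr_right fun _ => and_congr_right fun _ =>
    and_congr_right fun _ => and_congr_right fun _ => ?_
  exact forall₂_congr fun t ht => by rw [h t (Set.Ioo_subset_Icc_self ht)]

lemma negdir_congr (h : ∀ t ∈ Set.Icc a b, g t = f t) (hab : a ≤ b) :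
    IsNegDirectedSectionAt f m a b ↔ IsNegDirectedSectionAt g m a b := by
  unfold IsNegDirectedSectionAt
  rw [h a (Set.left_mem_Icc.2 hab), h b (Set.right_mem_Icc.2 hab)]
  refine and_congr_right fun _ => and_congr_right fun _ => and_congr_right fun _ =>
    and_congr_right fun _ => and_congr_right fun _ => ?_
  exact forall₂_congr fun t ht => by rw [h t (Set.Ioo_subset_Icc_self ht)]

lemma zero_shift (h : ∀ t ∈ Set.Icc a b, g t = f t + 2) :
    IsZeroSectionAt f m a b ↔ IsZeroSectionAt g (m + 2) a b := by
  unfold IsZeroSectionAt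
  refine and_congr_right fun _ => and_congr_right fun _ => and_congr_right fun _ => ?_
  refine forall₂_congr fun t ht => ?_
  rw [h t ht]
  constructor
  · intro h2; rw [h2]
  · intro h2; linarith

lemma prestable_shift (h : ∀ t ∈ Set.Icc a b, g t = f t + 2) (hab : a ≤ b) :
    IsPreStableAt f m a b ↔ IsPreStableAt g (m + 2) a b := by
  unfold IsPreStableAt
  rw [h a (Set.left_mem_Icc.2 hab), h b (Set.right_mem_Icc.2 hab)]
  refine and_congr_right fun _ => and_congr_right fun _ => and_congr_right fun _ => ?_
  constructor
  · rintro ⟨h1, h2, h3⟩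
    exact ⟨by rw [h1], by rw [h2], fun t ht => by
      rw [h t (Set.Ioo_subset_Icc_self ht)]; linarith [h3 t ht]⟩
  · rintro ⟨h1, h2, h3⟩
    refine ⟨by linarith, by linarith, fun t ht => ?_⟩
    have := h3 t ht
    rw [h t (Set.Ioo_subset_Icc_self ht)] at this
    linarith

lemma posdir_shift (h : ∀ t ∈ Set.Icc a b, g t = f t + 2) (hab : a ≤ b) :
    IsPosDirectedSectionAt f m a b ↔ IsPosDirectedSectionAt g (m + 2) a b := by
  unfold IsPosDirectedSectionAt
  rw [h a (Set.left_mem_Icc.2 hab), h b (Set.right_mem_Icc.2 hab)]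
  refine and_congr_right fun _ => and_congr_right fun _ => and_congr_right fun _ => ?_
  constructor
  · rintro ⟨h1, h2, h3⟩
    refine ⟨by rw [h1], by rw [h2]; ring, fun t ht => ?_⟩
    have := h3 t ht
    rw [h t (Set.Ioo_subset_Icc_self ht)]
    constructor <;> linarith [this.1, this.2]
  · rintro ⟨h1, h2, h3⟩
    refine ⟨by linarith, by linarith, fun t ht => ?_⟩
    have := h3 t ht
    rw [h t (Set.Ioo_subset_Icc_self ht)] at this
    constructor <;> linarith [this.1, this.2]

lemma negdir_shift (h : ∀ t ∈ Set.Icc a b, g t = f t + 2) (hab : a ≤ b) :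
    IsNegDirectedSectionAt f m a b ↔ IsNegDirectedSectionAt g (m + 2) a b := by
  unfold IsNegDirectedSectionAt
  rw [h a (Set.left_mem_Icc.2 hab), h b (Set.right_mem_Icc.2 hab)]
  refine and_congr_right fun _ => and_congr_right fun _ => and_congr_right fun _ => ?_
  constructor
  · rintro ⟨h1, h2, h3⟩
    refine ⟨by rw [h1], by rw [h2]; ring, fun t ht => ?_⟩
    have := h3 t ht
    rw [h t (Set.Ioo_subset_Icc_self ht)]
    constructor <;> linarith [this.1, this.2]
  · rintro ⟨h1, h2, h3⟩
    refine ⟨by linarith, by linarith, fun t ht => ?_⟩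
    have := h3 t ht
    rw [h t (Set.Ioo_subset_Icc_self ht)] at this
    constructor <;> linarith [this.1, this.2]

end Congr

section Stable

variable {V : Type*} [AddCommGroup V] [Module ℝ V]
variable {β : V →ₗ[ℝ] ℝ} {βv : V} {π : ℝ → V}

/-- On intervals left of `y`, `g = f`. -/
lemma hfg_left (hc : CoreFacts β π) {a b : ℝ} (hb : b ≤ yTime β π) :
    ∀ t ∈ Set.Icc a b, β (eOp β βv π t) = β (π t) :=
  fun t ht => eOp_beta_left t (le_trans ht.2 hb)

/-- On intervals right of `q`, `g = f + 2`. -/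
lemma hfg_right (hc : CoreFacts β π) (hβ : β βv = 2) {a b : ℝ} (ha : qTime β π ≤ a) :
    ∀ t ∈ Set.Icc a b, β (eOp β βv π t) = β (π t) + 2 :=
  fun t ht => eOp_beta_right hc hβ t (le_trans ha ht.1)

lemma mid_lt (hc : CoreFacts β π) {t : ℝ} (h : t ∈ Set.Ioo (yTime β π) (qTime β π)) :
    Qval β π < β (π t) ∧ β (π t) < Qval β π + 1 :=
  ⟨hc.hlt t (le_trans hc.hy01.1 h.1.le) h.2, hc.hmid t h⟩

lemma stable_left (hc : CoreFacts β π) (hβ : β βv = 2) {a b : ℝ} (hb : b ≤ yTime β π)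
    (m : ℝ) :
    IsStableSectionAt (fun t => β (π t)) m a b ↔
      IsStableSectionAt (fun t => β (eOp β βv π t)) m a b := by
  obtain ⟨mQ, hmQ⟩ := hc.hQint
  constructor
  · rintro ⟨hpre, hmax⟩
    have hab : a < b := hpre.2.1
    refine ⟨(prestable_congr (hfg_left hc hb) hab.le).1 hpre, ?_⟩
    rintro m' a' b' hpre' ha' hb'
    obtain ⟨ha'0, ha'b', hb'1, hga', hgb', hint'⟩ := hpre'
    dsimp only at hga' hgb' hint'
    have ha'y : a' < yTime β π := lt_of_le_of_lt ha' (lt_of_lt_of_le hab hb)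
    rcases le_or_gt b' (yTime β π) with hcase | hcase
    · exact hmax m' a' b' ((prestable_congr (hfg_left hc hcase) ha'b'.le).2
        ⟨ha'0, ha'b', hb'1, hga', hgb', hint'⟩) ha' hb'
    · exfalso
      have h2 : (m' : ℝ) < β (eOp β βv π (yTime β π)) := hint' (yTime β π) ⟨ha'y, hcase⟩
      rw [eOp_beta_y hc] at h2
      have h3 : Qval β π + 1 ≤ β (eOp β βv π a') :=
        eOp_ge hc hβ a' ⟨ha'0, le_trans ha'b'.le hb'1⟩
      rw [hga'] at h3
      linarith
  · rintro ⟨hpre, hmax⟩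
    have hab : a < b := hpre.2.1
    refine ⟨(prestable_congr (hfg_left hc hb) hab.le).2 hpre, ?_⟩
    rintro m' a' b' hpre' ha' hb'
    obtain ⟨ha'0, ha'b', hb'1, hfa', hfb', hint'⟩ := hpre'
    dsimp only at hfa' hfb' hint'
    have ha'y : a' < yTime β π := lt_of_le_of_lt ha' (lt_of_lt_of_le hab hb)
    rcases le_or_gt b' (yTime β π) with hcase | hcase
    · exact hmax m' a' b' ((prestable_congr (hfg_left hc hcase) ha'b'.le).1
        ⟨ha'0, ha'b', hb'1, hfa', hfb', hint'⟩) ha' hb'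
    rcases lt_trichotomy b' (qTime β π) with hcase2 | hcase2 | hcase2
    · exfalso
      have hm := mid_lt hc ⟨hcase, hcase2⟩
      rw [hfb'] at hm
      exact aux_no_int (mQ := mQ) (m := m') (by rw [← hmQ]; exact hm.1)
        (by rw [← hmQ]; exact hm.2)
    · exfalso
      rw [hcase2, hc.hfq] at hfb'
      have h4 : Qval β π < β (π a') := hc.hlt a' ha'0 (lt_trans ha'y hc.hyq)
      rw [hfa', ← hfb'] at h4
      exact lt_irrefl _ h4
    · exfalso
      have h5 : (m' : ℝ) < β (π (qTime β π)) :=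
        hint' (qTime β π) ⟨lt_trans ha'y hc.hyq, hcase2⟩
      rw [hc.hfq] at h5
      have h6 : Qval β π ≤ β (π a') := hc.hmin a' ⟨ha'0, le_trans ha'b'.le hb'1⟩
      rw [hfa'] at h6
      linarith

lemma stable_right (hc : CoreFacts β π) (hβ : β βv = 2) {a b : ℝ} (ha : qTime β π ≤ a)
    (m : ℝ) :
    IsStableSectionAt (fun t => β (π t)) m a b ↔
      IsStableSectionAt (fun t => β (eOp β βv π t)) (m + 2) a b := by
  obtain ⟨mQ, hmQ⟩ := hc.hQint
  constructor
  · rintro ⟨hpre, hmax⟩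
    have hab : a < b := hpre.2.1
    refine ⟨(prestable_shift (hfg_right hc hβ ha) hab.le).1 hpre, ?_⟩
    rintro m' a' b' hpre' ha' hb'
    obtain ⟨ha'0, ha'b', hb'1, hga', hgb', hint'⟩ := hpre'
    dsimp only at hga' hgb' hint'
    have hqb' : qTime β π < b' := lt_of_le_of_lt ha (lt_of_lt_of_le hab hb')
    rcases le_or_gt (qTime β π) a' with hcase | hcase
    · have hx : IsPreStableAt (fun t => β (π t)) ((m' : ℝ) - 2) a' b' := by
        refine (prestable_shift (hfg_right hc hβ hcase) ha'b'.le).2 ?_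
        have : (m' : ℝ) - 2 + 2 = (m' : ℝ) := by ring
        rw [this]
        exact ⟨ha'0, ha'b', hb'1, hga', hgb', hint'⟩
      have := hmax (m' - 2) a' b' (by push_cast; exact hx) ha' hb'
      exact this
    rcases lt_trichotomy a' (yTime β π) with hcase2 | hcase2 | hcase2
    · exfalso
      have h5 : (m' : ℝ) < β (eOp β βv π (yTime β π)) :=
        hint' (yTime β π) ⟨hcase2, lt_trans hc.hyq hqb'⟩
      rw [eOp_beta_y hc] at h5
      have h6 : β (eOp β βv π a') = β (π a') := eOp_beta_left a' hcase2.le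
      have h7 : Qval β π + 1 ≤ β (π a') := hc.hleft a' ⟨ha'0, hcase2.le⟩
      rw [hga'] at h6
      linarith
    · exfalso
      have h5 : β (eOp β βv π a') = Qval β π + 1 := by rw [hcase2, eOp_beta_y hc]
      rw [hga'] at h5
      have h6 : β (eOp β βv π b') = β (π b') + 2 := eOp_beta_right hc hβ b' hqb'.le
      rw [hgb'] at h6
      have h7 : Qval β π ≤ β (π b') := hc.hmin b' ⟨le_trans ha'0 ha'b'.le, hb'1⟩
      linarith
    · exfalso
      have hm := mid_lt hc ⟨hcase2, hcase⟩
      have h6 : β (eOp β βv π a') = 2 * (Qval β π + 1) - β (π a') :=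
        eOp_beta_mid hc hβ a' hcase2.le hcase.le
      rw [hga'] at h6
      refine aux_no_int (mQ := mQ + 1) (m := m') ?_ ?_
      · push_cast; rw [← hmQ]; linarith [hm.2]
      · push_cast; rw [← hmQ]; linarith [hm.1]
  · rintro ⟨hpre, hmax⟩
    have hab : a < b := hpre.2.1
    refine ⟨(prestable_shift (hfg_right hc hβ ha) hab.le).2 hpre, ?_⟩
    rintro m' a' b' hpre' ha' hb'
    obtain ⟨ha'0, ha'b', hb'1, hfa', hfb', hint'⟩ := hpre'
    dsimp only at hfa' hfb' hint'
    have hqb' : qTime β π < b' := lt_of_le_of_lt ha (lt_of_lt_of_le hab hb')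
    rcases le_or_gt (qTime β π) a' with hcase | hcase
    · have hx : IsPreStableAt (fun t => β (eOp β βv π t)) ((m' : ℝ) + 2) a' b' :=
        (prestable_shift (hfg_right hc hβ hcase) ha'b'.le).1
          ⟨ha'0, ha'b', hb'1, hfa', hfb', hint'⟩
      exact hmax (m' + 2) a' b' (by push_cast; exact hx) ha' hb'
    rcases lt_trichotomy a' (yTime β π) with hcase2 | hcase2 | hcase2
    · exfalso
      have h5 : (m' : ℝ) < β (π (qTime β π)) :=
        hint' (qTime β π) ⟨lt_trans hcase2 hc.hyq, hqb'⟩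
      rw [hc.hfq] at h5
      have h6 : Qval β π ≤ β (π a') := hc.hmin a' ⟨ha'0, le_trans ha'b'.le hb'1⟩
      rw [hfa'] at h6
      linarith
    · exfalso
      have h5 : β (π a') = Qval β π + 1 := by rw [hcase2, hc.hfy]
      rw [hfa'] at h5
      have h6 : (m' : ℝ) < β (π (qTime β π)) :=
        hint' (qTime β π) ⟨by rw [hcase2]; exact hc.hyq, hqb'⟩
      rw [hc.hfq] at h6
      linarith
    · exfalso
      have hm := mid_lt hc ⟨hcase2, hcase⟩
      rw [hfa'] at hm
      exact aux_no_int (mQ := mQ) (m := m') (by rw [← hmQ]; exact hm.1)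
        (by rw [← hmQ]; exact hm.2)

lemma eOp_posdir (hc : CoreFacts β π) (hβ : β βv = 2) :
    IsPosDirectedSectionAt (fun t => β (eOp β βv π t)) (Qval β π + 1)
      (yTime β π) (qTime β π) := by
  refine ⟨hc.hy01.1, hc.hyq, hc.hq01.2, eOp_beta_y hc, ?_, ?_⟩
  · show β (eOp β βv π (qTime β π)) = Qval β π + 1 + 1
    rw [eOp_beta_q hc hβ]; ring
  · intro t ht
    show Qval β π + 1 < β (eOp β βv π t) ∧ β (eOp β βv π t) < Qval β π + 1 + 1
    have hm := mid_lt hc ht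
    have h6 : β (eOp β βv π t) = 2 * (Qval β π + 1) - β (π t) :=
      eOp_beta_mid hc hβ t ht.1.le ht.2.le
    rw [h6]
    constructor <;> linarith [hm.1, hm.2]

end Stable

section Adjacency

variable {V : Type*} [AddCommGroup V] [Module ℝ V]
variable {β : V →ₗ[ℝ] ℝ} {βv : V} {π : ℝ → V}

lemma adj_yq (hc : CoreFacts β π) {T : Finset ℝ}
    (hT : IsSectionDecomposition (fun t => β (π t)) T) :
    Adjacent T (yTime β π) (qTime β π) ∧
      IsNegDirectedSectionAt (fun t => β (π t)) (Qval β π + 1) (yTime β π) (qTime β π) := by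
  classical
  obtain ⟨h0T, h1T, hTsub, hTsec⟩ := hT
  obtain ⟨mQ, hmQ⟩ := hc.hQint
  set q := qTime β π with hqdef
  set y := yTime β π with hydef
  -- step 1 : q ∈ T
  have hqT : q ∈ T := by
    by_contra hqT
    set S1 : Finset ℝ := T.filter (fun c => c < q) with hS1
    have hS1ne : S1.Nonempty := ⟨0, by simpa [hS1, h0T] using hc.hq0⟩
    set a := S1.max' hS1ne with hadef
    have haS1 : a ∈ S1 := S1.max'_mem hS1ne
    have haT : a ∈ T := (Finset.mem_filter.1 haS1).1
    have haq : a < q := (Finset.mem_filter.1 haS1).2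
    set S2 : Finset ℝ := T.filter (fun c => q ≤ c) with hS2
    have hS2ne : S2.Nonempty := ⟨1, by simpa [hS2, h1T] using hc.hq01.2⟩
    set b := S2.min' hS2ne with hbdef
    have hbS2 : b ∈ S2 := S2.min'_mem hS2ne
    have hbT : b ∈ T := (Finset.mem_filter.1 hbS2).1
    have hqb : q ≤ b := (Finset.mem_filter.1 hbS2).2
    have hqb' : q < b := lt_of_le_of_ne hqb (fun h => hqT (h ▸ hbT))
    have hadj : Adjacent T a b := by
      refine ⟨haT, hbT, lt_trans haq hqb', ?_⟩
      intro c hcT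
      rcases lt_or_ge c q with h | h
      · exact Or.inl (S1.le_max' c (Finset.mem_filter.2 ⟨hcT, h⟩))
      · exact Or.inr (S2.min'_le c (Finset.mem_filter.2 ⟨hcT, h⟩))
    have ha0 : 0 ≤ a := (hTsub haT).1
    have hqmem : q ∈ Set.Ioo a b := ⟨haq, hqb'⟩
    obtain ⟨m, hsec⟩ := hTsec a b hadj
    rcases hsec with hz | hs | hp | hn
    · -- zero section : f a = m = f q = Q, contradiction with minimality of q
      have h1 : β (π q) = (m:ℝ) := hz.2.2.2 q ⟨haq.le, hqb'.le⟩
      have h2 : β (π a) = (m:ℝ) := hz.2.2.2 a ⟨le_rfl, (lt_trans haq hqb').le⟩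
      rw [hc.hfq] at h1
      have := hc.hlt a ha0 haq
      rw [h2, ← h1] at this
      exact lt_irrefl _ this
    · -- stable : interior point q has f q > m = f a ≥ Q
      have h1 : (m:ℝ) < β (π q) := hs.1.2.2.2.2.2 q hqmem
      rw [hc.hfq] at h1
      have h2 : β (π a) = (m:ℝ) := hs.1.2.2.2.1
      have h3 := hc.hmin a (hTsub haT)
      rw [h2] at h3
      linarith
    · -- pos directed : m < f q = Q < m + 1 for integers, impossible
      have h1 := hp.2.2.2.2.2 q hqmem
      dsimp only at h1
      rw [hc.hfq, hmQ] at h1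
      exact aux_no_int (mQ := m) (m := mQ) h1.1 h1.2
    · -- neg directed : m - 1 < f q = Q < m, impossible
      have h1 := hn.2.2.2.2.2 q hqmem
      dsimp only at h1
      rw [hc.hfq, hmQ] at h1
      refine aux_no_int (mQ := m - 1) (m := mQ) ?_ ?_
      · push_cast; linarith [h1.1]
      · push_cast; linarith [h1.2]
  -- step 2 : the predecessor of q in T is y and the piece is neg-directed
  set S1 : Finset ℝ := T.filter (fun c => c < q) with hS1
  have hS1ne : S1.Nonempty := ⟨0, by simpa [hS1, h0T] using hc.hq0⟩
  set a := S1.max' hS1ne with hadef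
  have haS1 : a ∈ S1 := S1.max'_mem hS1ne
  have haT : a ∈ T := (Finset.mem_filter.1 haS1).1
  have haq : a < q := (Finset.mem_filter.1 haS1).2
  have ha0 : 0 ≤ a := (hTsub haT).1
  have hadj : Adjacent T a q := by
    refine ⟨haT, hqT, haq, ?_⟩
    intro c hcT
    rcases lt_or_ge c q with h | h
    · exact Or.inl (S1.le_max' c (Finset.mem_filter.2 ⟨hcT, h⟩))
    · exact Or.inr h
  obtain ⟨m, hsec⟩ := hTsec a q hadj
  have hne : IsNegDirectedSectionAt (fun t => β (π t)) ((m:ℝ)) a q ∧ (m:ℝ) = Qval β π + 1 := by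
    rcases hsec with hz | hs | hp | hn
    · exfalso
      have h1 : β (π q) = (m:ℝ) := hz.2.2.2 q ⟨haq.le, le_rfl⟩
      have h2 : β (π a) = (m:ℝ) := hz.2.2.2 a ⟨le_rfl, haq.le⟩
      rw [hc.hfq] at h1
      have := hc.hlt a ha0 haq
      rw [h2, ← h1] at this
      exact lt_irrefl _ this
    · exfalso
      have h1 : β (π a) = (m:ℝ) := hs.1.2.2.2.1
      have h2 : β (π q) = (m:ℝ) := hs.1.2.2.2.2.1
      rw [hc.hfq] at h2
      have := hc.hlt a ha0 haq
      rw [h1, ← h2] at this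
      exact lt_irrefl _ this
    · exfalso
      have h1 : β (π q) = (m:ℝ) + 1 := hp.2.2.2.2.1
      rw [hc.hfq] at h1
      have h2 : β (π a) = (m:ℝ) := hp.2.2.2.1
      have h3 := hc.hmin a (hTsub haT)
      rw [h2] at h3
      linarith
    · have h1 : β (π q) = (m:ℝ) - 1 := hn.2.2.2.2.1
      rw [hc.hfq] at h1
      exact ⟨hn, by linarith⟩
  have hay : a = y := by
    have hfa : β (π a) = Qval β π + 1 := by
      have hx := hne.1.2.2.2.1
      dsimp only at hx
      rw [hx, hne.2]
    have h1 : a ≤ y := hc.hymax a (hTsub haT) haq hfa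
    rcases lt_or_eq_of_le h1 with h2 | h2
    · exfalso
      have h3 : y ∈ Set.Ioo a q := ⟨h2, hc.hyq⟩
      have h4 := hne.1.2.2.2.2.2 y h3
      dsimp only at h4
      rw [hc.hfy, hne.2] at h4
      exact lt_irrefl _ h4.2
    · exact h2
  rw [hay] at hadj hne
  exact ⟨hadj, hne.2 ▸ hne.1⟩

lemma adj_cases (hc : CoreFacts β π) {T : Finset ℝ}
    (hyq : Adjacent T (yTime β π) (qTime β π)) {a b : ℝ} (h : Adjacent T a b) :
    b ≤ yTime β π ∨ (a = yTime β π ∧ b = qTime β π) ∨ qTime β π ≤ a := by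
  obtain ⟨haT, hbT, hab, hsep⟩ := h
  obtain ⟨hyT, hqT, hyq', hsep'⟩ := hyq
  rcases le_or_gt b (yTime β π) with h1 | h1
  · exact Or.inl h1
  have hqb : qTime β π ≤ b := (hsep' b hbT).resolve_left (not_le.2 h1)
  have hya : yTime β π ≤ a := (hsep (yTime β π) hyT).resolve_right (not_le.2 h1)
  rcases hsep (qTime β π) hqT with h2 | h2
  · exact Or.inr (Or.inr h2)
  · have hbq : b = qTime β π := le_antisymm h2 hqb
    have hay : a ≤ yTime β π := by
      rcases hsep' a haT with h3 | h3
      · exact h3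
      · exfalso; rw [hbq] at hab; linarith
    exact Or.inr (Or.inl ⟨le_antisymm hay hya, hbq⟩)

end Adjacency
/-- Compatibility of the raising operator with the section decomposition. -/
theorem eOp_section_decomposition {V : Type*} [AddCommGroup V] [Module ℝ V]
    (β : V →ₗ[ℝ] ℝ) (βv : V) (hβ : β βv = 2)
    (π : ℝ → V) (hπ : IsPath π) (hint : IsIntegralFn (fun t => β (π t)))
    (hQ : Qval β π ≤ -1) :
    IsPath (eOp β βv π) ∧
    IsIntegralFn (fun t => β (eOp β βv π t)) ∧
    Qval β (eOp β βv π) = Qval β π + 1 ∧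
    ∀ T : Finset ℝ,
      IsSectionDecomposition (fun t => β (π t)) T →
      NoTwoConsecutiveZeroSections (fun t => β (π t)) T →
        (IsSectionDecomposition (fun t => β (eOp β βv π t)) T ∧
         NoTwoConsecutiveZeroSections (fun t => β (eOp β βv π t)) T ∧
         Adjacent T (yTime β π) (qTime β π) ∧
         IsNegDirectedSectionAt (fun t => β (π t)) (Qval β π + 1) (yTime β π) (qTime β π) ∧
         IsPosDirectedSectionAt (fun t => β (eOp β βv π t)) (Qval β π + 1)
           (yTime β π) (qTime β π) ∧
         (∀ a b : ℝ, Adjacent T a b → b ≤ yTime β π → ∀ m : ℝ,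
            (IsZeroSectionAt (fun t => β (π t)) m a b ↔
              IsZeroSectionAt (fun t => β (eOp β βv π t)) m a b) ∧
            (IsStableSectionAt (fun t => β (π t)) m a b ↔
              IsStableSectionAt (fun t => β (eOp β βv π t)) m a b) ∧
            (IsPosDirectedSectionAt (fun t => β (π t)) m a b ↔
              IsPosDirectedSectionAt (fun t => β (eOp β βv π t)) m a b) ∧
            (IsNegDirectedSectionAt (fun t => β (π t)) m a b ↔
              IsNegDirectedSectionAt (fun t => β (eOp β βv π t)) m a b)) ∧
         (∀ a b : ℝ, Adjacent T a b → qTime β π ≤ a → ∀ m : ℝ,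
            (IsZeroSectionAt (fun t => β (π t)) m a b ↔
              IsZeroSectionAt (fun t => β (eOp β βv π t)) (m + 2) a b) ∧
            (IsStableSectionAt (fun t => β (π t)) m a b ↔
              IsStableSectionAt (fun t => β (eOp β βv π t)) (m + 2) a b) ∧
            (IsPosDirectedSectionAt (fun t => β (π t)) m a b ↔
              IsPosDirectedSectionAt (fun t => β (eOp β βv π t)) (m + 2) a b) ∧
            (IsNegDirectedSectionAt (fun t => β (π t)) m a b ↔
              IsNegDirectedSectionAt (fun t => β (eOp β βv π t)) (m + 2) a b))) := by
  have hc := coreFacts β π hπ hint hQ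
  obtain ⟨mQ, hmQ⟩ := hc.hQint
  refine ⟨eOp_isPath hc hπ, eOp_integral hc hβ hint, eOp_Qval hc hβ, ?_⟩
  intro T hT hTz
  obtain ⟨hadj, hnegf⟩ := adj_yq hc hT
  have hleftpkg : ∀ a b : ℝ, Adjacent T a b → b ≤ yTime β π → ∀ m : ℝ,
      (IsZeroSectionAt (fun t => β (π t)) m a b ↔
        IsZeroSectionAt (fun t => β (eOp β βv π t)) m a b) ∧
      (IsStableSectionAt (fun t => β (π t)) m a b ↔
        IsStableSectionAt (fun t => β (eOp β βv π t)) m a b) ∧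
      (IsPosDirectedSectionAt (fun t => β (π t)) m a b ↔
        IsPosDirectedSectionAt (fun t => β (eOp β βv π t)) m a b) ∧
      (IsNegDirectedSectionAt (fun t => β (π t)) m a b ↔
        IsNegDirectedSectionAt (fun t => β (eOp β βv π t)) m a b) := by
    intro a b hab hby m
    have hfg : ∀ t ∈ Set.Icc a b, β (eOp β βv π t) = β (π t) := hfg_left hc hby
    exact ⟨zero_congr hfg, stable_left hc hβ hby m, posdir_congr hfg hab.2.2.1.le,
      negdir_congr hfg hab.2.2.1.le⟩
  have hrightpkg : ∀ a b : ℝ, Adjacent T a b → qTime β π ≤ a → ∀ m : ℝ,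
      (IsZeroSectionAt (fun t => β (π t)) m a b ↔
        IsZeroSectionAt (fun t => β (eOp β βv π t)) (m + 2) a b) ∧
      (IsStableSectionAt (fun t => β (π t)) m a b ↔
        IsStableSectionAt (fun t => β (eOp β βv π t)) (m + 2) a b) ∧
      (IsPosDirectedSectionAt (fun t => β (π t)) m a b ↔
        IsPosDirectedSectionAt (fun t => β (eOp β βv π t)) (m + 2) a b) ∧
      (IsNegDirectedSectionAt (fun t => β (π t)) m a b ↔
        IsNegDirectedSectionAt (fun t => β (eOp β βv π t)) (m + 2) a b) := by
    intro a b hab hqa m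
    have hfg : ∀ t ∈ Set.Icc a b, β (eOp β βv π t) = β (π t) + 2 := hfg_right hc hβ hqa
    exact ⟨zero_shift hfg, stable_right hc hβ hqa m, posdir_shift hfg hab.2.2.1.le,
      negdir_shift hfg hab.2.2.1.le⟩
  refine ⟨?_, ?_, hadj, hnegf, eOp_posdir hc hβ, hleftpkg, hrightpkg⟩
  · -- g-section decomposition
    refine ⟨hT.1, hT.2.1, hT.2.2.1, ?_⟩
    intro a b hab
    rcases adj_cases hc hadj hab with h | ⟨ha, hb⟩ | h
    · obtain ⟨m, hsec⟩ := hT.2.2.2 a b hab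
      have pkg := hleftpkg a b hab h (m : ℝ)
      rcases hsec with h1 | h1 | h1 | h1
      · exact ⟨m, Or.inl (pkg.1.1 h1)⟩
      · exact ⟨m, Or.inr (Or.inl (pkg.2.1.1 h1))⟩
      · exact ⟨m, Or.inr (Or.inr (Or.inl (pkg.2.2.1.1 h1)))⟩
      · exact ⟨m, Or.inr (Or.inr (Or.inr (pkg.2.2.2.1 h1)))⟩
    · refine ⟨mQ + 1, Or.inr (Or.inr (Or.inl ?_))⟩
      have hcast : ((mQ + 1 : ℤ) : ℝ) = Qval β π + 1 := by push_cast; rw [hmQ]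
      rw [ha, hb, hcast]
      exact eOp_posdir hc hβ
    · obtain ⟨m, hsec⟩ := hT.2.2.2 a b hab
      have pkg := hrightpkg a b hab h (m : ℝ)
      have hcast : ((m + 2 : ℤ) : ℝ) = (m : ℝ) + 2 := by push_cast; ring
      refine ⟨m + 2, ?_⟩
      rw [hcast]
      rcases hsec with h1 | h1 | h1 | h1
      · exact Or.inl (pkg.1.1 h1)
      · exact Or.inr (Or.inl (pkg.2.1.1 h1))
      · exact Or.inr (Or.inr (Or.inl (pkg.2.2.1.1 h1)))
      · exact Or.inr (Or.inr (Or.inr (pkg.2.2.2.1 h1)))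
  · -- no two consecutive zero sections for g
    rintro a b c hab hbc ⟨⟨m1, hz1⟩, ⟨m2, hz2⟩⟩
    have hnotyq : ∀ (u v : ℝ) (mm : ℤ), u = yTime β π → v = qTime β π →
        IsZeroSectionAt (fun t => β (eOp β βv π t)) (mm : ℝ) u v → False := by
      intro u v mm hu hv hzz
      have huv : u ≤ v := hzz.2.1.le
      have h1 := hzz.2.2.2 u (Set.left_mem_Icc.2 huv)
      have h2 := hzz.2.2.2 v (Set.right_mem_Icc.2 huv)
      dsimp only at h1 h2
      rw [hu, eOp_beta_y hc] at h1
      rw [hv, eOp_beta_q hc hβ] at h2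
      linarith
    have transfer : ∀ (u v : ℝ) (mm : ℤ), Adjacent T u v →
        IsZeroSectionAt (fun t => β (eOp β βv π t)) (mm : ℝ) u v →
        ∃ m : ℤ, IsZeroSectionAt (fun t => β (π t)) (m : ℝ) u v := by
      intro u v mm huv hzz
      rcases adj_cases hc hadj huv with h | ⟨hu, hv⟩ | h
      · exact ⟨mm, (zero_congr (hfg_left hc h)).2 hzz⟩
      · exact absurd hzz (fun hx => hnotyq u v mm hu hv hx)
      · refine ⟨mm - 2, ?_⟩
        have hcast : ((mm - 2 : ℤ) : ℝ) = (mm : ℝ) - 2 := by push_cast; ring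
        rw [hcast]
        refine (zero_shift (hfg_right hc hβ h)).2 ?_
        have : (mm : ℝ) - 2 + 2 = (mm : ℝ) := by ring
        rw [this]
        exact hzz
    obtain ⟨m1', h1'⟩ := transfer a b m1 hab hz1
    obtain ⟨m2', h2'⟩ := transfer b c m2 hbc hz2
    exact hTz a b c hab hbc ⟨⟨m1', h1'⟩, ⟨m2', h2'⟩⟩

end MVPaper
end

section
/- Let (i_1, …, i_n) be a reduced word, and let π be a path such that Θ_{k−1} is α_{i_k}-integral for each 1 ≤ k ≤ n. Set β_n^∨ = w(n−1)(α_{i_n}^∨). Then Υ'_{n−1}(π)(0) − Υ'_n(π)(0) = ε_{α_{i_n}}(Θ_{n−1}) · β_n^∨, where ε_{α_{i_n}}(Θ_{n−1}) = −min α_{i_n}∘Θ_{n−1}. -/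
open Set

namespace MVPaper

variable {V : Type*} [AddCommGroup V] [Module ℝ V]

variable {I : Type*}

/-- A root generating system for a generalized Cartan matrix. -/
def IsRootGenSystem (α : I → (V →ₗ[ℝ] ℝ)) (αv : I → V) : Prop :=
  LinearIndependent ℝ α ∧ LinearIndependent ℝ αv ∧
  (∀ i, α i (αv i) = 2) ∧
  (∀ i j, i ≠ j → ∃ n : ℤ, n ≤ 0 ∧ α j (αv i) = (n : ℝ)) ∧
  (∀ i j, α j (αv i) = 0 ↔ α i (αv j) = 0)

/-- The simple reflection `s_i`. -/
def si (α : I → (V →ₗ[ℝ] ℝ)) (αv : I → V) (i : I) : V → V :=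
  fun v => v - α i v • αv i

/-- The product `s_{i_1} ∘ ⋯ ∘ s_{i_n}` associated to a word `[i_1, …, i_n]`. -/
def wProd (α : I → (V →ₗ[ℝ] ℝ)) (αv : I → V) (c : List I) : V → V :=
  c.foldr (fun i g => (si α αv i) ∘ g) id

/-- A word is reduced if its Weyl group element cannot be written with fewer generators. -/
def IsReducedWord (α : I → (V →ₗ[ℝ] ℝ)) (αv : I → V) (c : List I) : Prop :=
  ∀ c' : List I, wProd α αv c' = wProd α αv c → c.length ≤ c'.length

/-- `Θ` for the word `[i_1, …, i_k]`: `f_{α_{i_k}}^{max} ⋯ f_{α_{i_1}}^{max} (π)`. -/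
noncomputable def ThetaPath (α : I → (V →ₗ[ℝ] ℝ)) (αv : I → V) (c : List I) (π : ℝ → V) :
    ℝ → V :=
  c.foldl (fun σ i => fMax (α i) (αv i) σ) π

/-- Each `Θ_{k-1}` is `α_{i_k}`-integral. -/
def ThetaIntegral (α : I → (V →ₗ[ℝ] ℝ)) (αv : I → V) (c : List I) (π : ℝ → V) : Prop :=
  ∀ k : Fin c.length,
    IsIntegralFn (fun t => α (c.get k) (ThetaPath α αv (c.take k) π t))

/-- `Υ_w(π) = w ∘ f_w^{max}(π)`. -/
noncomputable def UpsPath (α : I → (V →ₗ[ℝ] ℝ)) (αv : I → V) (c : List I) (π : ℝ → V) :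
    ℝ → V :=
  fun t => wProd α αv c (ThetaPath α αv c π t)

/-- `Υ'_w(π)`, the translate of `Υ_w(π)` ending at `π(1)`. -/
noncomputable def UpsPath' (α : I → (V →ₗ[ℝ] ℝ)) (αv : I → V) (c : List I) (π : ℝ → V) :
    ℝ → V :=
  fun t => UpsPath α αv c π t + (π 1 - UpsPath α αv c π 1)

/-! ### Auxiliary lemmas -/

section AuxTop

theorem continuousOn_union_closed {X Y : Type*} [TopologicalSpace X] [TopologicalSpace Y]
    {f : X → Y} {s t : Set X} (hs : IsClosed s) (ht : IsClosed t)
    (h1 : ContinuousOn f s) (h2 : ContinuousOn f t) : ContinuousOn f (s ∪ t) := by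
  intro x hx
  apply continuousWithinAt_union.2
  constructor
  · by_cases h : x ∈ s
    · exact h1 x h
    · exact continuousWithinAt_of_notMem_closure (by rwa [hs.closure_eq])
  · by_cases h : x ∈ t
    · exact h2 x h
    · exact continuousWithinAt_of_notMem_closure (by rwa [ht.closure_eq])

end AuxTop

section Aux

variable {V : Type*} [AddCommGroup V] [Module ℝ V]

/-- For a piecewise linear path, every linear functional composed with it is continuous
on `[0,1]`. -/
theorem IsPWLinearOn.lin_continuousOn {π : ℝ → V} (hπ : IsPWLinearOn π)
    (γ : V →ₗ[ℝ] ℝ) : ContinuousOn (fun t => γ (π t)) (Set.Icc 0 1) := by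
  obtain ⟨n, t, hmono, h0, h1, hp⟩ := hπ
  have key : ∀ m : ℕ, ∀ hm : m ≤ n,
      ContinuousOn (fun s => γ (π s)) (Set.Icc (t 0) (t ⟨m, Nat.lt_succ_of_le hm⟩)) := by
    intro m
    induction m with
    | zero =>
      intro hm
      have he : (⟨0, Nat.lt_succ_of_le hm⟩ : Fin (n + 1)) = 0 := rfl
      rw [he, Set.Icc_self]
      exact continuousOn_singleton _ _
    | succ m ih =>
      intro hm
      have hm' : m ≤ n := Nat.le_of_succ_le hm
      obtain ⟨a, b, hab⟩ := hp ⟨m, hm⟩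
      have ec : (⟨m, hm⟩ : Fin n).castSucc = (⟨m, Nat.lt_succ_of_le hm'⟩ : Fin (n + 1)) := by
        ext; simp
      have es : (⟨m, hm⟩ : Fin n).succ = (⟨m + 1, Nat.lt_succ_of_le hm⟩ : Fin (n + 1)) := by
        ext; simp
      have c2 : ContinuousOn (fun s => γ (π s))
          (Set.Icc (t ⟨m, Nat.lt_succ_of_le hm'⟩) (t ⟨m + 1, Nat.lt_succ_of_le hm⟩)) := by
        refine ContinuousOn.congr (f := fun s : ℝ => s * γ a + γ b)
          (((continuous_id.mul continuous_const).add continuous_const).continuousOn) ?_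
        intro s hs
        rw [← ec, ← es] at hs
        show γ (π s) = s * γ a + γ b
        rw [hab s hs, map_add, map_smul, smul_eq_mul]
      have hu := continuousOn_union_closed isClosed_Icc isClosed_Icc (ih hm') c2
      rwa [Set.Icc_union_Icc_eq_Icc (hmono (Fin.zero_le _))
        (hmono (Fin.mk_le_mk.2 (Nat.le_succ m)))] at hu
  have hfin := key n le_rfl
  have he : (⟨n, Nat.lt_succ_of_le le_rfl⟩ : Fin (n + 1)) = Fin.last n := rfl
  rw [he, h0, h1] at hfin
  exact hfin

variable (β : V →ₗ[ℝ] ℝ) (βv : V) (σ : ℝ → V)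

theorem Qval_le_of_mem (hf : ContinuousOn (fun t => β (σ t)) (Set.Icc 0 1))
    {t : ℝ} (ht : t ∈ Set.Icc (0:ℝ) 1) : Qval β σ ≤ β (σ t) := by
  simp only [Qval]
  exact csInf_le (isCompact_Icc.image_of_continuousOn hf).bddBelow
    (Set.mem_image_of_mem _ ht)

theorem Qval_mem_image (hf : ContinuousOn (fun t => β (σ t)) (Set.Icc 0 1)) :
    Qval β σ ∈ (fun t => β (σ t)) '' Set.Icc 0 1 := by
  simp only [Qval]
  exact (isCompact_Icc.image_of_continuousOn hf).sInf_mem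
    ((Set.nonempty_Icc.2 zero_le_one).image _)

theorem Qval_exists_int (hf : ContinuousOn (fun t => β (σ t)) (Set.Icc 0 1))
    (hI : IsIntegralFn (fun t => β (σ t))) : ∃ m : ℤ, Qval β σ = m := by
  obtain ⟨t0, ht0, hft0p⟩ := Qval_mem_image β σ hf
  have hft0 : β (σ t0) = Qval β σ := hft0p
  by_cases h0 : t0 = 0
  · obtain ⟨m, hmp⟩ := hI.1
    have hm : β (σ 0) = (m:ℝ) := hmp
    exact ⟨m, by rw [← hft0, h0, hm]⟩
  by_cases h1 : t0 = 1
  · obtain ⟨m, hmp⟩ := hI.2.1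
    have hm : β (σ 1) = (m:ℝ) := hmp
    exact ⟨m, by rw [← hft0, h1, hm]⟩
  have hin : t0 ∈ Set.Ioo (0:ℝ) 1 :=
    ⟨lt_of_le_of_ne ht0.1 (Ne.symm h0), lt_of_le_of_ne ht0.2 h1⟩
  have hloc : IsLocalMinPt (fun t => β (σ t)) t0 := by
    refine ⟨hin, ?_⟩
    filter_upwards [isOpen_Ioo.mem_nhds hin] with s hs
    rw [hft0]
    exact Qval_le_of_mem β σ hf ⟨hs.1.le, hs.2.le⟩
  obtain ⟨m, hmp⟩ := hI.2.2 t0 hloc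
  have hm : β (σ t0) = (m:ℝ) := hmp
  exact ⟨m, by rw [← hft0, hm]⟩

/-- The main single-step lemma for the lowering operator `f_β`. -/
theorem fOp_step (h2 : β βv = 2)
    (hC : ∀ γ : V →ₗ[ℝ] ℝ, ContinuousOn (fun t => γ (σ t)) (Set.Icc 0 1))
    (hI : IsIntegralFn (fun t => β (σ t)))
    (hφ : Qval β σ + 1 ≤ β (σ 1)) :
    (∀ γ : V →ₗ[ℝ] ℝ, ContinuousOn (fun t => γ (fOp β βv σ t)) (Set.Icc 0 1)) ∧
      IsIntegralFn (fun t => β (fOp β βv σ t)) ∧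
      fOp β βv σ 1 = σ 1 - βv ∧
      Qval β (fOp β βv σ) = Qval β σ - 1 := by
  have hfc : ContinuousOn (fun t => β (σ t)) (Set.Icc 0 1) := hC β
  obtain ⟨qz, hqz⟩ := Qval_exists_int β σ hfc hI
  have hQle : ∀ t ∈ Set.Icc (0:ℝ) 1, Qval β σ ≤ β (σ t) :=
    fun t ht => Qval_le_of_mem β σ hfc ht
  -- facts about p := pTime β σ
  have hpS : pTime β σ = sSup {t | t ∈ Set.Icc (0:ℝ) 1 ∧ β (σ t) = Qval β σ} := rfl
  have hSpc : IsClosed {t | t ∈ Set.Icc (0:ℝ) 1 ∧ β (σ t) = Qval β σ} := by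
    have he : {t | t ∈ Set.Icc (0:ℝ) 1 ∧ β (σ t) = Qval β σ}
        = Set.Icc 0 1 ∩ (fun t => β (σ t)) ⁻¹' {Qval β σ} := by
      ext u; simp [Set.mem_setOf_eq]
    rw [he]
    exact hfc.preimage_isClosed_of_isClosed isClosed_Icc isClosed_singleton
  have hSpne : {t | t ∈ Set.Icc (0:ℝ) 1 ∧ β (σ t) = Qval β σ}.Nonempty := by
    obtain ⟨t0, ht0, hft0⟩ := Qval_mem_image β σ hfc
    exact ⟨t0, ht0, hft0⟩
  have hSpbdd : BddAbove {t | t ∈ Set.Icc (0:ℝ) 1 ∧ β (σ t) = Qval β σ} :=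
    ⟨1, fun y hy => hy.1.2⟩
  have hpmem : pTime β σ ∈ {t | t ∈ Set.Icc (0:ℝ) 1 ∧ β (σ t) = Qval β σ} := by
    rw [hpS]; exact hSpc.csSup_mem hSpne hSpbdd
  have hp01 : pTime β σ ∈ Set.Icc (0:ℝ) 1 := hpmem.1
  have hfp : β (σ (pTime β σ)) = Qval β σ := hpmem.2
  have hlast : ∀ t ∈ Set.Icc (0:ℝ) 1, pTime β σ < t → Qval β σ < β (σ t) := by
    intro t ht hpt
    refine lt_of_le_of_ne (hQle t ht) fun h => absurd (le_csSup hSpbdd ⟨ht, h.symm⟩) ?_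
    rw [← hpS]; exact not_le.2 hpt
  -- facts about x := xTime β σ
  have hxS : xTime β σ
      = sInf {t | t ∈ Set.Icc (0:ℝ) 1 ∧ pTime β σ < t ∧ β (σ t) = Qval β σ + 1} := rfl
  have hSxeq : {t | t ∈ Set.Icc (0:ℝ) 1 ∧ pTime β σ < t ∧ β (σ t) = Qval β σ + 1}
      = (Set.Icc 0 1 ∩ (fun t => β (σ t)) ⁻¹' {Qval β σ + 1}) ∩ Set.Ici (pTime β σ) := by
    ext u
    simp only [Set.mem_setOf_eq, Set.mem_inter_iff, Set.mem_preimage,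
      Set.mem_singleton_iff, Set.mem_Ici]
    constructor
    · rintro ⟨h1, h2', h3⟩; exact ⟨⟨h1, h3⟩, h2'.le⟩
    · rintro ⟨⟨h1, h3⟩, h2'⟩
      refine ⟨h1, lt_of_le_of_ne h2' fun h => ?_, h3⟩
      rw [← h, hfp] at h3; linarith
  have hSxc : IsClosed {t | t ∈ Set.Icc (0:ℝ) 1 ∧ pTime β σ < t ∧ β (σ t) = Qval β σ + 1} := by
    rw [hSxeq]
    exact (hfc.preimage_isClosed_of_isClosed isClosed_Icc isClosed_singleton).inter isClosed_Ici
  have hSxne : {t | t ∈ Set.Icc (0:ℝ) 1 ∧ pTime β σ < t ∧ β (σ t) = Qval β σ + 1}.Nonempty := by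
    have hsub : Set.Icc (pTime β σ) 1 ⊆ Set.Icc (0:ℝ) 1 := Set.Icc_subset_Icc hp01.1 le_rfl
    have hIVT := intermediate_value_Icc hp01.2 (hfc.mono hsub)
    have hmem : Qval β σ + 1 ∈ Set.Icc (β (σ (pTime β σ))) (β (σ 1)) := by
      rw [hfp]; exact ⟨by linarith, hφ⟩
    obtain ⟨t1, ht1, hft1p⟩ := hIVT hmem
    have hft1 : β (σ t1) = Qval β σ + 1 := hft1p
    refine ⟨t1, ⟨le_trans hp01.1 ht1.1, ht1.2⟩, lt_of_le_of_ne ht1.1 fun h => ?_, hft1⟩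
    rw [← h, hfp] at hft1; linarith
  have hSxbdd : BddBelow {t | t ∈ Set.Icc (0:ℝ) 1 ∧ pTime β σ < t ∧ β (σ t) = Qval β σ + 1} :=
    ⟨0, fun y hy => hy.1.1⟩
  have hxmem : xTime β σ
      ∈ {t | t ∈ Set.Icc (0:ℝ) 1 ∧ pTime β σ < t ∧ β (σ t) = Qval β σ + 1} := by
    rw [hxS]; exact hSxc.csInf_mem hSxne hSxbdd
  have hx01 : xTime β σ ∈ Set.Icc (0:ℝ) 1 := hxmem.1
  have hpx : pTime β σ < xTime β σ := hxmem.2.1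
  have hfx : β (σ (xTime β σ)) = Qval β σ + 1 := hxmem.2.2
  have hxmin : ∀ t ∈ {t | t ∈ Set.Icc (0:ℝ) 1 ∧ pTime β σ < t ∧ β (σ t) = Qval β σ + 1},
      xTime β σ ≤ t := fun t ht => by rw [hxS]; exact csInf_le hSxbdd ht
  have hmid : ∀ t : ℝ, pTime β σ < t → t < xTime β σ → β (σ t) < Qval β σ + 1 := by
    intro t h1 h2
    by_contra hge
    push_neg at hge
    have ht01 : t ∈ Set.Icc (0:ℝ) 1 := ⟨le_trans hp01.1 h1.le, le_trans h2.le hx01.2⟩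
    have hsub : Set.Icc (pTime β σ) t ⊆ Set.Icc (0:ℝ) 1 := Set.Icc_subset_Icc hp01.1 ht01.2
    have hIVT := intermediate_value_Icc h1.le (hfc.mono hsub)
    have hmem : Qval β σ + 1 ∈ Set.Icc (β (σ (pTime β σ))) (β (σ t)) := by
      rw [hfp]; exact ⟨by linarith, hge⟩
    obtain ⟨s, hs, hfsp⟩ := hIVT hmem
    have hfs : β (σ s) = Qval β σ + 1 := hfsp
    have hsx : s ∈ {t | t ∈ Set.Icc (0:ℝ) 1 ∧ pTime β σ < t ∧ β (σ t) = Qval β σ + 1} := by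
      refine ⟨⟨le_trans hp01.1 hs.1, le_trans hs.2 ht01.2⟩,
        lt_of_le_of_ne hs.1 fun h => ?_, hfs⟩
      rw [← h, hfp] at hfs; linarith
    have h4 := le_trans (hxmin s hsx) hs.2
    linarith
  have htail : ∀ t ∈ Set.Icc (xTime β σ) 1, Qval β σ + 1 ≤ β (σ t) := by
    have hsub : Set.Icc (xTime β σ) 1 ⊆ Set.Icc (0:ℝ) 1 := Set.Icc_subset_Icc hx01.1 le_rfl
    obtain ⟨s, hs, hsmin'⟩ := isCompact_Icc.exists_isMinOn
      (Set.nonempty_Icc.2 hx01.2) (hfc.mono hsub)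
    have hsmin : ∀ u ∈ Set.Icc (xTime β σ) 1, β (σ s) ≤ β (σ u) :=
      fun u hu => hsmin' hu
    have hkey : Qval β σ + 1 ≤ β (σ s) := by
      rcases eq_or_lt_of_le hs.1 with heq | hlt
      · rw [← heq, hfx]
      rcases eq_or_lt_of_le hs.2 with heq1 | hlt1
      · rw [heq1]; exact hφ
      have hloc : IsLocalMinPt (fun t => β (σ t)) s := by
        refine ⟨⟨lt_of_le_of_lt hx01.1 hlt, hlt1⟩, ?_⟩
        filter_upwards [isOpen_Ioo.mem_nhds (⟨hlt, hlt1⟩ : s ∈ Set.Ioo (xTime β σ) 1)] with u hu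
        exact hsmin u ⟨hu.1.le, hu.2.le⟩
      obtain ⟨m, hmp⟩ := hI.2.2 s hloc
      have hm : β (σ s) = (m:ℝ) := hmp
      have hQm : Qval β σ < β (σ s) := hlast s (hsub hs) (lt_trans hpx hlt)
      rw [hm, hqz] at hQm ⊢
      have h5 : qz < m := by exact_mod_cast hQm
      have h6 : qz + 1 ≤ m := h5
      exact_mod_cast h6
    intro t ht
    exact le_trans hkey (hsmin t ht)
  -- pointwise values of fOp
  have hv1 : ∀ t : ℝ, t ≤ pTime β σ → fOp β βv σ t = σ t := by
    intro t ht
    simp only [fOp]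
    rw [if_pos ht]
  have hv2 : ∀ t : ℝ, pTime β σ < t → t ≤ xTime β σ →
      fOp β βv σ t = σ t - (β (σ t) - Qval β σ) • βv := by
    intro t h1 h2'
    simp only [fOp, sRefl]
    rw [if_neg (not_le.2 h1), if_pos h2', map_sub, hfp]
    abel
  have hv3 : ∀ t : ℝ, xTime β σ < t → fOp β βv σ t = σ t - βv := by
    intro t ht
    simp only [fOp]
    rw [if_neg (not_le.2 (lt_trans hpx ht)), if_neg (not_le.2 ht)]
  have hw1 : ∀ t : ℝ, t ≤ pTime β σ → β (fOp β βv σ t) = β (σ t) :=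
    fun t ht => by rw [hv1 t ht]
  have hw2 : ∀ t : ℝ, pTime β σ < t → t ≤ xTime β σ →
      β (fOp β βv σ t) = 2 * Qval β σ - β (σ t) := by
    intro t h1 h2'
    rw [hv2 t h1 h2', map_sub, map_smul, smul_eq_mul, h2]
    ring
  have hw3 : ∀ t : ℝ, xTime β σ < t → β (fOp β βv σ t) = β (σ t) - 2 := by
    intro t ht
    rw [hv3 t ht, map_sub, h2]
  -- endpoint value
  have hone : fOp β βv σ 1 = σ 1 - βv := by
    rcases eq_or_lt_of_le hx01.2 with heq | hlt
    · have hveq := hv2 1 (lt_of_lt_of_le hpx hx01.2) heq.ge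
      have hf1 : β (σ 1) = Qval β σ + 1 := by
        conv_lhs => rw [← heq]
        exact hfx
      rw [hveq, hf1]
      have hco : Qval β σ + 1 - Qval β σ = 1 := by ring
      rw [hco, one_smul]
    · exact hv3 1 hlt
  refine ⟨?_, ?_, hone, ?_⟩
  -- continuity
  · intro γ
    have hsub1 : Set.Icc (0:ℝ) (pTime β σ) ⊆ Set.Icc (0:ℝ) 1 :=
      Set.Icc_subset_Icc le_rfl hp01.2
    have hsub2 : Set.Icc (pTime β σ) (xTime β σ) ⊆ Set.Icc (0:ℝ) 1 :=
      Set.Icc_subset_Icc hp01.1 hx01.2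
    have hsub3 : Set.Icc (xTime β σ) 1 ⊆ Set.Icc (0:ℝ) 1 :=
      Set.Icc_subset_Icc hx01.1 le_rfl
    have c1 : ContinuousOn (fun t => γ (fOp β βv σ t)) (Set.Icc 0 (pTime β σ)) := by
      refine ContinuousOn.congr ((hC γ).mono hsub1) ?_
      intro s hs
      show γ (fOp β βv σ s) = γ (σ s)
      rw [hv1 s hs.2]
    have c2 : ContinuousOn (fun t => γ (fOp β βv σ t))
        (Set.Icc (pTime β σ) (xTime β σ)) := by
      refine ContinuousOn.congr
        (f := fun t => γ (σ t) - (β (σ t) - Qval β σ) * γ βv)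
        ((((hC γ).mono hsub2).sub
          ((((hC β).mono hsub2).sub continuousOn_const).mul continuousOn_const))) ?_
      intro s hs
      show γ (fOp β βv σ s) = γ (σ s) - (β (σ s) - Qval β σ) * γ βv
      rcases eq_or_lt_of_le hs.1 with heq | hlt
      · rw [← heq, hv1 (pTime β σ) le_rfl, hfp]
        simp
      · rw [hv2 s hlt hs.2, map_sub, map_smul, smul_eq_mul]
    have c3 : ContinuousOn (fun t => γ (fOp β βv σ t)) (Set.Icc (xTime β σ) 1) := by
      refine ContinuousOn.congr (f := fun t => γ (σ t) - γ βv)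
        (((hC γ).mono hsub3).sub continuousOn_const) ?_
      intro s hs
      show γ (fOp β βv σ s) = γ (σ s) - γ βv
      rcases eq_or_lt_of_le hs.1 with heq | hlt
      · rw [← heq, hv2 (xTime β σ) hpx le_rfl, hfx, map_sub, map_smul, smul_eq_mul]
        ring_nf
      · rw [hv3 s hlt, map_sub]
    have g1 := continuousOn_union_closed isClosed_Icc isClosed_Icc c1 c2
    rw [Set.Icc_union_Icc_eq_Icc hp01.1 hpx.le] at g1
    have g2 := continuousOn_union_closed isClosed_Icc isClosed_Icc g1 c3
    rwa [Set.Icc_union_Icc_eq_Icc hx01.1 hx01.2] at g2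
  -- integrality
  · refine ⟨?_, ?_, ?_⟩
    · obtain ⟨m, hmp⟩ := hI.1
      have hm : β (σ 0) = (m:ℝ) := hmp
      refine ⟨m, ?_⟩
      show β (fOp β βv σ 0) = (m:ℝ)
      rw [hw1 0 hp01.1, hm]
    · obtain ⟨m, hmp⟩ := hI.2.1
      have hm : β (σ 1) = (m:ℝ) := hmp
      refine ⟨m - 2, ?_⟩
      show β (fOp β βv σ 1) = ((m - 2 : ℤ):ℝ)
      rw [hone, map_sub, h2, hm]
      push_cast
      ring
    · rintro t ⟨ht01, hev⟩
      rcases lt_trichotomy t (pTime β σ) with hlt | heq | hgt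
      · -- before p
        have heeq : ∀ᶠ s in nhds t, β (fOp β βv σ s) = β (σ s) := by
          filter_upwards [isOpen_Iio.mem_nhds (hlt : t ∈ Set.Iio (pTime β σ))] with s hs
          exact hw1 s (le_of_lt hs)
        have hloc : IsLocalMinPt (fun s => β (σ s)) t := by
          refine ⟨ht01, ?_⟩
          filter_upwards [hev, heeq] with s h1 h3
          have h1' : β (fOp β βv σ t) ≤ β (fOp β βv σ s) := h1
          show β (σ t) ≤ β (σ s)
          rw [← h3, ← hw1 t hlt.le]
          exact h1'
        obtain ⟨m, hmp⟩ := hI.2.2 t hloc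
        have hm : β (σ t) = (m:ℝ) := hmp
        refine ⟨m, ?_⟩
        show β (fOp β βv σ t) = (m:ℝ)
        rw [hw1 t hlt.le]
        exact hm
      · -- t = p : impossible
        exfalso
        subst heq
        obtain ⟨ε, hε, hball⟩ := Metric.eventually_nhds_iff.1 hev
        have hts : pTime β σ < min (pTime β σ + ε / 2) ((pTime β σ + xTime β σ) / 2) :=
          lt_min (by linarith) (by linarith)
        have hsx : min (pTime β σ + ε / 2) ((pTime β σ + xTime β σ) / 2) < xTime β σ :=
          lt_of_le_of_lt (min_le_right _ _) (by linarith)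
        have hdist : dist (min (pTime β σ + ε / 2) ((pTime β σ + xTime β σ) / 2))
            (pTime β σ) < ε := by
          rw [Real.dist_eq, abs_of_pos (by linarith)]
          have h7 := min_le_left (pTime β σ + ε / 2) ((pTime β σ + xTime β σ) / 2)
          linarith
        have h1 : β (fOp β βv σ (pTime β σ))
            ≤ β (fOp β βv σ (min (pTime β σ + ε / 2) ((pTime β σ + xTime β σ) / 2))) :=
          hball hdist
        rw [hw1 (pTime β σ) le_rfl, hfp, hw2 _ hts hsx.le] at h1
        have hQs : Qval β σ < β (σ (min (pTime β σ + ε / 2) ((pTime β σ + xTime β σ) / 2))) :=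
          hlast _ ⟨le_trans hp01.1 hts.le, le_trans hsx.le hx01.2⟩ hts
        linarith
      rcases lt_trichotomy t (xTime β σ) with hlt | heq | hgt2
      · -- p < t < x : impossible
        exfalso
        have ht01' : t ∈ Set.Icc (0:ℝ) 1 := ⟨ht01.1.le, ht01.2.le⟩
        have hft : β (σ t) < Qval β σ + 1 := hmid t hgt hlt
        have hQt : Qval β σ < β (σ t) := hlast t ht01' hgt
        have hloc : ∀ᶠ s in nhds t, β (σ s) ≤ β (σ t) := by
          filter_upwards [hev,
            isOpen_Ioo.mem_nhds (⟨hgt, hlt⟩ : t ∈ Set.Ioo (pTime β σ) (xTime β σ))] with s h1 h3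
          have h1' : β (fOp β βv σ t) ≤ β (fOp β βv σ s) := h1
          rw [hw2 s h3.1 h3.2.le, hw2 t hgt hlt.le] at h1'
          linarith
        obtain ⟨ε0, hε0, hb⟩ := Metric.eventually_nhds_iff.1 hloc
        have hδ : 0 < min ε0 (xTime β σ - t) := lt_min hε0 (by linarith)
        set δ : ℝ := min ε0 (xTime β σ - t) with hδdef
        have hδx : t + δ ≤ xTime β σ := by
          have h7 : δ ≤ xTime β σ - t := min_le_right _ _
          linarith
        have hδε : δ ≤ ε0 := min_le_left _ _
        have hsubtx : Set.Icc t (xTime β σ) ⊆ Set.Icc (0:ℝ) 1 :=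
          Set.Icc_subset_Icc ht01'.1 hx01.2
        obtain ⟨s2, hs2mem, hs2min'⟩ := isCompact_Icc.exists_isMinOn
          (Set.nonempty_Icc.2 hlt.le) (hfc.mono hsubtx)
        have hs2min : ∀ u ∈ Set.Icc t (xTime β σ), β (σ s2) ≤ β (σ u) :=
          fun u hu => hs2min' hu
        have hs2t : β (σ s2) ≤ β (σ t) := hs2min t ⟨le_rfl, hlt.le⟩
        have hs2x : s2 < xTime β σ := by
          rcases eq_or_lt_of_le hs2mem.2 with heq2 | h
          · exfalso; rw [heq2, hfx] at hs2t; linarith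
          · exact h
        rcases eq_or_lt_of_le hs2mem.1 with heq2 | hlt2
        · -- minimum attained at t : f is constant near t on the right
          have hconst : ∀ s ∈ Set.Ioo t (t + δ), β (σ s) = β (σ t) := by
            intro s hs
            refine le_antisymm (hb ?_) ?_
            · rw [Real.dist_eq, abs_of_pos (by linarith [hs.1])]
              linarith [hs.2, hδε]
            · have h8 := hs2min s ⟨hs.1.le, le_trans hs.2.le hδx⟩
              rw [← heq2] at h8
              exact h8
          have ht'mem : t + δ / 2 ∈ Set.Ioo t (t + δ) := ⟨by linarith, by linarith⟩
          have hloc' : IsLocalMinPt (fun s => β (σ s)) (t + δ / 2) := by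
            refine ⟨⟨by linarith [ht01.1], by linarith [hδx, hx01.2]⟩, ?_⟩
            filter_upwards [isOpen_Ioo.mem_nhds ht'mem] with s hs
            rw [hconst _ ht'mem, hconst s hs]
          obtain ⟨m, hmp⟩ := hI.2.2 _ hloc'
          have hm : β (σ (t + δ / 2)) = (m:ℝ) := hmp
          rw [hconst _ ht'mem] at hm
          rw [hqz, hm] at hQt hft
          have h5 : qz < m := by exact_mod_cast hQt
          have h6 : m < qz + 1 := by exact_mod_cast hft
          omega
        · -- minimum strictly inside (t, x)
          have hloc' : IsLocalMinPt (fun s => β (σ s)) s2 := by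
            refine ⟨⟨lt_trans ht01.1 hlt2, lt_of_lt_of_le hs2x hx01.2⟩, ?_⟩
            filter_upwards [isOpen_Ioo.mem_nhds
              (⟨hlt2, hs2x⟩ : s2 ∈ Set.Ioo t (xTime β σ))] with s hs
            exact hs2min s ⟨hs.1.le, hs.2.le⟩
          obtain ⟨m, hmp⟩ := hI.2.2 s2 hloc'
          have hm : β (σ s2) = (m:ℝ) := hmp
          have hQs2 : Qval β σ < β (σ s2) := hlast s2 (hsubtx hs2mem) (lt_trans hgt hlt2)
          have hup : β (σ s2) < Qval β σ + 1 := lt_of_le_of_lt hs2t hft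
          rw [hqz, hm] at hQs2 hup
          have h5 : qz < m := by exact_mod_cast hQs2
          have h6 : m < qz + 1 := by exact_mod_cast hup
          omega
      · -- t = x
        subst heq
        refine ⟨qz - 1, ?_⟩
        show β (fOp β βv σ (xTime β σ)) = ((qz - 1 : ℤ):ℝ)
        rw [hw2 _ hpx le_rfl, hfx, hqz]
        push_cast
        ring
      · -- after x
        have heeq : ∀ᶠ s in nhds t, β (fOp β βv σ s) = β (σ s) - 2 := by
          filter_upwards [isOpen_Ioi.mem_nhds (hgt2 : t ∈ Set.Ioi (xTime β σ))] with s hs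
          exact hw3 s hs
        have hloc : IsLocalMinPt (fun s => β (σ s)) t := by
          refine ⟨ht01, ?_⟩
          filter_upwards [hev, heeq] with s h1 h3
          have h1' : β (fOp β βv σ t) ≤ β (fOp β βv σ s) := h1
          rw [hw3 t hgt2, h3] at h1'
          show β (σ t) ≤ β (σ s)
          linarith
        obtain ⟨m, hmp⟩ := hI.2.2 t hloc
        have hm : β (σ t) = (m:ℝ) := hmp
        refine ⟨m - 2, ?_⟩
        show β (fOp β βv σ t) = ((m - 2 : ℤ):ℝ)
        rw [hw3 t hgt2, hm]
        push_cast
        ring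
  -- the minimum decreases by one
  · have hlow : ∀ s ∈ Set.Icc (0:ℝ) 1, Qval β σ - 1 ≤ β (fOp β βv σ s) := by
      intro s hs
      rcases le_or_gt s (pTime β σ) with h1 | h1
      · rw [hw1 s h1]; linarith [hQle s hs]
      rcases le_or_gt s (xTime β σ) with h2' | h2'
      · rw [hw2 s h1 h2']
        rcases eq_or_lt_of_le h2' with heq | hlt
        · rw [heq, hfx]; linarith
        · linarith [hmid s h1 hlt]
      · rw [hw3 s h2']
        linarith [htail s ⟨h2'.le, hs.2⟩]
    have hxval : β (fOp β βv σ (xTime β σ)) = Qval β σ - 1 := by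
      rw [hw2 _ hpx le_rfl, hfx]; ring
    have himg : Qval β (fOp β βv σ)
        = sInf ((fun t => β (fOp β βv σ t)) '' Set.Icc 0 1) := rfl
    rw [himg]
    apply le_antisymm
    · have hle := csInf_le (⟨Qval β σ - 1, fun y hy => by
        obtain ⟨u, hu, huy⟩ := hy
        rw [← huy]; exact hlow u hu⟩ :
          BddBelow ((fun t => β (fOp β βv σ t)) '' Set.Icc 0 1))
        (Set.mem_image_of_mem _ hx01)
      rw [hxval] at hle
      exact hle
    · refine le_csInf ((Set.nonempty_Icc.2 zero_le_one).image _) ?_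
      rintro y ⟨u, hu, rfl⟩
      exact hlow u hu

theorem fOp_iter_props (h2 : β βv = 2)
    (hC : ∀ γ : V →ₗ[ℝ] ℝ, ContinuousOn (fun t => γ (σ t)) (Set.Icc 0 1))
    (hI : IsIntegralFn (fun t => β (σ t))) :
    ∀ j, j ≤ ⌊phiVal β σ⌋₊ →
      (∀ γ : V →ₗ[ℝ] ℝ, ContinuousOn (fun t => γ ((fOp β βv)^[j] σ t)) (Set.Icc 0 1)) ∧
      IsIntegralFn (fun t => β ((fOp β βv)^[j] σ t)) ∧
      (fOp β βv)^[j] σ 1 = σ 1 - (j : ℝ) • βv ∧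
      Qval β ((fOp β βv)^[j] σ) = Qval β σ - j := by
  have hφ0 : 0 ≤ phiVal β σ := by
    have h := Qval_le_of_mem β σ (hC β) (Set.right_mem_Icc.2 zero_le_one)
    simp only [phiVal]
    linarith
  intro j
  induction j with
  | zero =>
    intro _
    exact ⟨hC, hI, by simp, by simp⟩
  | succ n ih =>
    intro hn
    obtain ⟨c1, c2, c3, c4⟩ := ih (Nat.le_of_succ_le hn)
    have hfn1 : β ((fOp β βv)^[n] σ 1) = β (σ 1) - n * 2 := by
      rw [c3, map_sub, map_smul, smul_eq_mul, h2]
    have hcast : ((n:ℝ) + 1) ≤ (⌊phiVal β σ⌋₊ : ℝ) := by exact_mod_cast hn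
    have hfl : (⌊phiVal β σ⌋₊ : ℝ) ≤ phiVal β σ := Nat.floor_le hφ0
    have hphiv : phiVal β σ = β (σ 1) - Qval β σ := rfl
    have hφn : Qval β ((fOp β βv)^[n] σ) + 1 ≤ β ((fOp β βv)^[n] σ 1) := by
      rw [c4, hfn1]
      have hfl2 : (⌊phiVal β σ⌋₊ : ℝ) ≤ β (σ 1) - Qval β σ := by
        conv_rhs => rw [← hphiv]
        exact Nat.floor_le hφ0
      linarith
    obtain ⟨d1, d2, d3, d4⟩ := fOp_step β βv ((fOp β βv)^[n] σ) h2 c1 c2 hφn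
    rw [Function.iterate_succ_apply']
    refine ⟨d1, d2, ?_, ?_⟩
    · rw [d3, c3]
      push_cast
      rw [add_smul, one_smul]
      abel
    · rw [d4, c4]
      push_cast
      ring

theorem fMax_props (h2 : β βv = 2)
    (hC : ∀ γ : V →ₗ[ℝ] ℝ, ContinuousOn (fun t => γ (σ t)) (Set.Icc 0 1))
    (hI : IsIntegralFn (fun t => β (σ t))) :
    (∀ γ : V →ₗ[ℝ] ℝ, ContinuousOn (fun t => γ (fMax β βv σ t)) (Set.Icc 0 1)) ∧
      fMax β βv σ 1 = σ 1 - (β (σ 1) - Qval β σ) • βv := by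
  obtain ⟨c1, _, c3, _⟩ := fOp_iter_props β βv σ h2 hC hI ⌊phiVal β σ⌋₊ le_rfl
  obtain ⟨a, hap⟩ := hI.2.1
  have ha : β (σ 1) = (a:ℝ) := hap
  obtain ⟨qz, hqz⟩ := Qval_exists_int β σ (hC β) hI
  have hQle1 : Qval β σ ≤ β (σ 1) :=
    Qval_le_of_mem β σ (hC β) (Set.right_mem_Icc.2 zero_le_one)
  have hphiv : phiVal β σ = β (σ 1) - Qval β σ := rfl
  have h0 : (0:ℤ) ≤ a - qz := by
    have h1 : (qz:ℝ) ≤ (a:ℝ) := by rw [← ha, ← hqz]; exact hQle1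
    have h2' : qz ≤ a := by exact_mod_cast h1
    omega
  have hφint : phiVal β σ = ((a - qz : ℤ) : ℝ) := by
    rw [hphiv, ha, hqz]; push_cast; ring
  have hfl : (⌊phiVal β σ⌋₊ : ℝ) = phiVal β σ := by
    obtain ⟨k, hk⟩ := Int.eq_ofNat_of_zero_le h0
    rw [hφint, hk]
    push_cast
    rw [Nat.floor_natCast]
  constructor
  · intro γ
    show ContinuousOn (fun t => γ ((fOp β βv)^[⌊phiVal β σ⌋₊] σ t)) (Set.Icc 0 1)
    exact c1 γ
  · show (fOp β βv)^[⌊phiVal β σ⌋₊] σ 1 = _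
    rw [c3, hfl, hphiv]

theorem fOp_apply_zero : fOp β βv σ 0 = σ 0 := by
  simp only [fOp]
  rw [if_pos (show (0:ℝ) ≤ pTime β σ from Real.sSup_nonneg fun y hy => hy.1.1)]

theorem fOp_iterate_zero (n : ℕ) : (fOp β βv)^[n] σ 0 = σ 0 := by
  induction n with
  | zero => rfl
  | succ n ih => rw [Function.iterate_succ_apply', fOp_apply_zero β βv _, ih]

theorem fMax_apply_zero : fMax β βv σ 0 = σ 0 := by
  show (fOp β βv)^[⌊phiVal β σ⌋₊] σ 0 = σ 0
  exact fOp_iterate_zero β βv σ _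

end Aux

section Words

variable {V : Type*} [AddCommGroup V] [Module ℝ V] {I : Type*}
variable (α : I → (V →ₗ[ℝ] ℝ)) (αv : I → V)

theorem thetaPath_cons (j : I) (c : List I) (π : ℝ → V) :
    ThetaPath α αv (j :: c) π = ThetaPath α αv c (fMax (α j) (αv j) π) := rfl

theorem thetaPath_concat (c : List I) (j : I) (π : ℝ → V) :
    ThetaPath α αv (c ++ [j]) π = fMax (α j) (αv j) (ThetaPath α αv c π) := by
  simp [ThetaPath, List.foldl_append]

theorem thetaPath_zero (c : List I) (π : ℝ → V) : ThetaPath α αv c π 0 = π 0 := by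
  induction c generalizing π with
  | nil => rfl
  | cons j c ih =>
    rw [thetaPath_cons, ih, fMax_apply_zero]

theorem wProd_cons (j : I) (c : List I) :
    wProd α αv (j :: c) = si α αv j ∘ wProd α αv c := rfl

theorem wProd_append (c d : List I) :
    wProd α αv (c ++ d) = wProd α αv c ∘ wProd α αv d := by
  induction c with
  | nil => rfl
  | cons j c ih =>
    rw [List.cons_append, wProd_cons, wProd_cons, ih]
    rfl

theorem wProd_add (c : List I) (u v : V) :
    wProd α αv c (u + v) = wProd α αv c u + wProd α αv c v := by
  induction c with
  | nil => rfl
  | cons j c ih =>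
    rw [wProd_cons]
    simp only [Function.comp_apply, ih, si]
    rw [map_add, add_smul]
    abel

theorem wProd_smul (c : List I) (r : ℝ) (u : V) :
    wProd α αv c (r • u) = r • wProd α αv c u := by
  induction c with
  | nil => rfl
  | cons j c ih =>
    rw [wProd_cons]
    simp only [Function.comp_apply, ih, si]
    rw [map_smul, smul_eq_mul, mul_smul, smul_sub]

theorem wProd_zero (c : List I) : wProd α αv c 0 = 0 := by
  have h := wProd_smul α αv c 0 0
  simpa using h

theorem theta_take_allCont (h2 : ∀ j, α j (αv j) = 2) (c : List I) (π : ℝ → V)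
    (hπc : ∀ γ : V →ₗ[ℝ] ℝ, ContinuousOn (fun t => γ (π t)) (Set.Icc 0 1))
    (hint : ThetaIntegral α αv c π) :
    ∀ k, k ≤ c.length → ∀ γ : V →ₗ[ℝ] ℝ,
      ContinuousOn (fun t => γ (ThetaPath α αv (c.take k) π t)) (Set.Icc 0 1) := by
  intro k
  induction k with
  | zero =>
    intro _ γ
    simpa [ThetaPath] using hπc γ
  | succ k ih =>
    intro hk γ
    have hk' : k < c.length := hk
    have e : c.take (k + 1) = c.take k ++ [c.get ⟨k, hk'⟩] := by
      have h := List.take_concat_get hk'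
      rw [List.concat_eq_append] at h
      rw [← h]
      simp [List.get_eq_getElem]
    rw [e, thetaPath_concat]
    exact (fMax_props (α (c.get ⟨k, hk'⟩)) (αv (c.get ⟨k, hk'⟩))
      (ThetaPath α αv (c.take k) π) (h2 _) (fun γ' => ih (le_of_lt hk') γ')
      (hint ⟨k, hk'⟩)).1 γ

end Words


/-- `Υ'_{w}(π)(0) − Υ'_{ws_{i_n}}(π)(0) = ε_{α_{i_n}}(Θ_{n−1}) β_n^∨`. -/
theorem upsPath'_consecutive_difference {V : Type*} [AddCommGroup V] [Module ℝ V]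
    [FiniteDimensional ℝ V] {I : Type*} [Fintype I]
    (α : I → (V →ₗ[ℝ] ℝ)) (αv : I → V) (hrs : IsRootGenSystem α αv)
    (w : List I) (i : I) (hred : IsReducedWord α αv (w ++ [i]))
    (π : ℝ → V) (hπ : IsPath π) (hint : ThetaIntegral α αv (w ++ [i]) π) :
    UpsPath' α αv w π 0 - UpsPath' α αv (w ++ [i]) π 0
      = (-(Qval (α i) (ThetaPath α αv w π))) • wProd α αv w (αv i) := by
  have h2i : α i (αv i) = 2 := hrs.2.2.1 i
  have hπc : ∀ γ : V →ₗ[ℝ] ℝ, ContinuousOn (fun t => γ (π t)) (Set.Icc 0 1) :=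
    fun γ => hπ.2.lin_continuousOn γ
  have hall := theta_take_allCont α αv hrs.2.2.1 (w ++ [i]) π hπc hint
  have htake : (w ++ [i]).take w.length = w := List.take_left
  have hCσ : ∀ γ : V →ₗ[ℝ] ℝ,
      ContinuousOn (fun t => γ (ThetaPath α αv w π t)) (Set.Icc 0 1) := by
    intro γ
    have h := hall w.length (by simp) γ
    rwa [htake] at h
  have hlen : w.length < (w ++ [i]).length := by simp
  have hIσ : IsIntegralFn (fun t => α i (ThetaPath α αv w π t)) := by
    have h := hint ⟨w.length, hlen⟩
    have e1 : (w ++ [i]).get ⟨w.length, hlen⟩ = i := by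
      simp [List.get_eq_getElem]
    have e2 : (w ++ [i]).take ((⟨w.length, hlen⟩ : Fin (w ++ [i]).length) : ℕ) = w := htake
    rw [e1, e2] at h
    exact h
  have hfmax := (fMax_props (α i) (αv i) (ThetaPath α αv w π) h2i hCσ hIσ).2
  have hz : ∀ c : List I, UpsPath α αv c π 0 = 0 := by
    intro c
    simp only [UpsPath]
    rw [thetaPath_zero, hπ.1, wProd_zero]
  simp only [UpsPath']
  rw [hz w, hz (w ++ [i])]
  simp only [UpsPath]
  rw [thetaPath_concat, hfmax, wProd_append]
  simp only [Function.comp_apply]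
  have hsi : wProd α αv [i] (ThetaPath α αv w π 1
        - (α i (ThetaPath α αv w π 1) - Qval (α i) (ThetaPath α αv w π)) • αv i)
      = ThetaPath α αv w π 1 + (-(Qval (α i) (ThetaPath α αv w π))) • αv i := by
    show si α αv i (ThetaPath α αv w π 1
        - (α i (ThetaPath α αv w π 1) - Qval (α i) (ThetaPath α αv w π)) • αv i) = _
    simp only [si, map_sub, map_smul, smul_eq_mul, h2i]
    module
  rw [hsi, wProd_add, wProd_smul]
  abel

end MVPaper
end

section
/- Let P = f_{i_1}^{k_1} ⋯ f_{i_t}^{k_t}(P_0) be a top MV polytope, where k_1 > k_2 > ⋯ > k_t > 0, the indices i_j ∈ ℤ/2ℤ satisfy i_{j+1} = i_j + 1 with i_1 = 1, and P_0 is the trivial MV polytope. Then the right datum of P has a_1 = k_1, and for every integer K with 1 ≤ K ≤ k_1, the MV polytope e_1^K(P) (the unique MV polytope whose right datum equals that of P with a_1 replaced by k_1 − K) has ā_1 < K in its left datum. -/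
namespace MVPaper


/-- head sum `∑_{j<k} j * f j` -/
def hq (f : ℕ →₀ ℕ) (k : ℕ) : ℕ := ∑ j ∈ Finset.range k, j * f j
/-- head sum `∑_{j<k} (j+1) * f j` -/
def hE (f : ℕ →₀ ℕ) (k : ℕ) : ℕ := ∑ j ∈ Finset.range k, (j+1) * f j
def qT (f : ℕ →₀ ℕ) : ℕ := f.sum fun j m => j * m
def eT (f : ℕ →₀ ℕ) : ℕ := f.sum fun j m => (j+1) * m
def sT (f : ℕ →₀ ℕ) : ℕ := f.sum fun _ m => m

lemma hq_succ (f : ℕ →₀ ℕ) (k : ℕ) : hq f (k+1) = hq f k + k * f k :=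
  Finset.sum_range_succ _ k

lemma hE_succ (f : ℕ →₀ ℕ) (k : ℕ) : hE f (k+1) = hE f k + (k+1) * f k :=
  Finset.sum_range_succ _ k

lemma hq_zero (f : ℕ →₀ ℕ) : hq f 0 = 0 := rfl
lemma hE_zero (f : ℕ →₀ ℕ) : hE f 0 = 0 := rfl
lemma hq_one (f : ℕ →₀ ℕ) : hq f 1 = 0 := by simp [hq]

lemma hq_stab (f : ℕ →₀ ℕ) {k : ℕ} (h : ∀ n ∈ f.support, n < k) : hq f k = qT f := by
  rw [qT, Finsupp.sum]
  exact (Finset.sum_subset (fun x hx => Finset.mem_range.2 (h x hx))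
    (fun x _ hx => by simp [Finsupp.notMem_support_iff.1 hx])).symm

lemma hE_stab (f : ℕ →₀ ℕ) {k : ℕ} (h : ∀ n ∈ f.support, n < k) : hE f k = eT f := by
  rw [eT, Finsupp.sum]
  exact (Finset.sum_subset (fun x hx => Finset.mem_range.2 (h x hx))
    (fun x _ hx => by simp [Finsupp.notMem_support_iff.1 hx])).symm

/-- a common stability bound for finitely many finsupps -/
lemma exists_stab (f g : ℕ →₀ ℕ) : ∃ N, 1 ≤ N ∧ ∀ k, N ≤ k →
    hq f k = qT f ∧ hE f k = eT f ∧ hq g k = qT g ∧ hE g k = eT g := by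
  refine ⟨(f.support ∪ g.support).sup id + 1, le_add_self, fun k hk => ?_⟩
  have hf : ∀ n ∈ f.support, n < k := fun n hn =>
    lt_of_lt_of_le (Nat.lt_succ_of_le (Finset.le_sup (f := id) (Finset.mem_union_left _ hn))) hk
  have hg : ∀ n ∈ g.support, n < k := fun n hn =>
    lt_of_lt_of_le (Nat.lt_succ_of_le (Finset.le_sup (f := id) (Finset.mem_union_right _ hn))) hk
  exact ⟨hq_stab f hf, hE_stab f hf, hq_stab g hg, hE_stab g hg⟩

lemma eT_eq_qT_add_sT (f : ℕ →₀ ℕ) : eT f = qT f + sT f := by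
  rw [eT, qT, sT, Finsupp.sum, Finsupp.sum, Finsupp.sum, ← Finset.sum_add_distrib]
  exact Finset.sum_congr rfl fun j _ => by ring

lemma apply_le_sT (f : ℕ →₀ ℕ) (n : ℕ) : f n ≤ sT f := by
  by_cases h : n ∈ f.support
  · exact Finset.single_le_sum (f := fun j => f j) (fun _ _ => Nat.zero_le _) h
  · simp [Finsupp.notMem_support_iff.1 h]

lemma sT_eq_zero {f : ℕ →₀ ℕ} (h : sT f = 0) : f = 0 := by
  ext n
  have h2 := apply_le_sT f n
  rw [h] at h2
  simpa using h2

/-- The interlacing system between two adjacent Lusztig data halves. -/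
def Sys (f g : ℕ →₀ ℕ) : Prop :=
  ∀ k, 1 ≤ k → hq f (k+1) ≤ hE g k ∧ hq g (k+1) ≤ hE f k ∧
    (hq f (k+1) = hE g k ∨ hq g (k+1) = hE f k)

lemma Sys.symm {f g : ℕ →₀ ℕ} (h : Sys f g) : Sys g f := by
  intro k hk
  obtain ⟨h1, h2, h3⟩ := h k hk
  exact ⟨h2, h1, h3.symm⟩

lemma Sys.zero_zero : Sys (0 : ℕ →₀ ℕ) 0 := by
  intro k _
  simp [hq, hE]

/-- Certificate: `w` is the canonical lower companion of `s`. -/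
def Cert (w s : ℕ →₀ ℕ) : Prop := Sys w s ∧ eT w = qT s



lemma exists_min {p : ℕ → Prop} (hex : ∃ n, p n) : ∃ r, p r ∧ ∀ j, j < r → ¬ p j := by
  classical
  obtain ⟨n, hn⟩ := hex
  induction n using Nat.strong_induction_on with
  | _ n ih =>
    by_cases h : ∃ m, m < n ∧ p m
    · obtain ⟨m, hm, hpm⟩ := h
      exact ih m hm hpm
    · push_neg at h
      exact ⟨n, hn, fun j hj => h j hj⟩

section Core

/-- `σ`-difference -/
def sg (X T : ℕ →₀ ℕ) (k : ℕ) : ℤ := (hE X k : ℤ) - (hq T (k+1) : ℤ)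
/-- `τ`-difference -/
def tu (X T : ℕ →₀ ℕ) (k : ℕ) : ℤ := (hE T k : ℤ) - (hq X (k+1) : ℤ)
/-- `D`-difference -/
def Df (X Y : ℕ →₀ ℕ) (k : ℕ) : ℤ := (hE X k : ℤ) - (hE Y k : ℤ)

variable {T X Y : ℕ →₀ ℕ}

lemma sg_nonneg (hX : Sys X T) (k : ℕ) : 0 ≤ sg X T k := by
  rcases Nat.eq_zero_or_pos k with rfl | hk
  · simp [sg, hE_zero, hq_one]
  · have := (hX k hk).2.1
    simp only [sg, sub_nonneg]
    exact_mod_cast this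

lemma tu_nonneg (hX : Sys X T) (k : ℕ) : 0 ≤ tu X T k := by
  rcases Nat.eq_zero_or_pos k with rfl | hk
  · simp [tu, hE_zero, hq_one]
  · have := (hX k hk).1
    simp only [tu, sub_nonneg]
    exact_mod_cast this

lemma dich (hX : Sys X T) (k : ℕ) : sg X T k = 0 ∨ tu X T k = 0 := by
  rcases Nat.eq_zero_or_pos k with rfl | hk
  · right; simp [tu, hE_zero, hq_one]
  · rcases (hX k hk).2.2 with h | h
    · right; simp [tu, h]
    · left; simp [sg, h]

lemma sg_sub_sg (X Y T : ℕ →₀ ℕ) (k : ℕ) : sg X T k - sg Y T k = Df X Y k := by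
  simp only [sg, Df]; ring

set_option maxHeartbeats 1000000 in
lemma core_aux (hX : Sys X T) (hY : Sys Y T) (hEq : eT X = eT Y)
    (r : ℕ) (hmin : ∀ j, j < r → X j = Y j) (hlt : Y r < X r) : False := by
  have hEhead : ∀ k, k ≤ r → (hE X k : ℤ) = (hE Y k : ℤ) := by
    intro k hk
    have : hE X k = hE Y k := Finset.sum_congr rfl fun j hj => by
      rw [hmin j (lt_of_lt_of_le (Finset.mem_range.1 hj) hk)]
    exact_mod_cast this
  have hqhead : (hq X r : ℤ) = (hq Y r : ℤ) := by
    have : hq X r = hq Y r := Finset.sum_congr rfl fun j hj => by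
      rw [hmin j (Finset.mem_range.1 hj)]
    exact_mod_cast this
  have hΔ0pos : 1 ≤ (X r : ℤ) - (Y r : ℤ) := by
    have : (Y r : ℤ) < (X r : ℤ) := by exact_mod_cast hlt
    omega
  -- expansions
  have hEX1 : (hE X (r+1) : ℤ) = (hE X r : ℤ) + ((r:ℤ)+1) * (X r : ℤ) := by
    rw [hE_succ]; push_cast; ring
  have hEY1 : (hE Y (r+1) : ℤ) = (hE Y r : ℤ) + ((r:ℤ)+1) * (Y r : ℤ) := by
    rw [hE_succ]; push_cast; ring
  have hEX2 : (hE X (r+2) : ℤ) = (hE X (r+1) : ℤ) + ((r:ℤ)+2) * (X (r+1) : ℤ) := by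
    rw [hE_succ (k := r+1)]; push_cast; ring
  have hEY2 : (hE Y (r+2) : ℤ) = (hE Y (r+1) : ℤ) + ((r:ℤ)+2) * (Y (r+1) : ℤ) := by
    rw [hE_succ (k := r+1)]; push_cast; ring
  have hDr1 : Df X Y (r+1) = ((r:ℤ)+1) * ((X r : ℤ) - (Y r : ℤ)) := by
    simp only [Df]
    rw [hEX1, hEY1, hEhead r le_rfl]; ring
  have hDr2 : Df X Y (r+2) = ((r:ℤ)+1) * ((X r : ℤ) - (Y r : ℤ))
      + ((r:ℤ)+2) * ((X (r+1) : ℤ) - (Y (r+1) : ℤ)) := by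
    simp only [Df] at hDr1 ⊢
    rw [hEX2, hEY2]
    linarith [hDr1]
  have hsgpos : 0 < sg X T (r+1) := by
    have h1 := sg_nonneg hY (r+1)
    have h2 := sg_sub_sg X Y T (r+1)
    have h3 : (0:ℤ) < ((r:ℤ)+1) * ((X r : ℤ) - (Y r : ℤ)) := by positivity
    rw [hDr1] at h2
    linarith
  have htuX1 : tu X T (r+1) = 0 := by
    rcases dich hX (r+1) with h | h
    · exact absurd h (by omega)
    · exact h
  have hqX2 : (hq X (r+2) : ℤ) = (hq X r : ℤ) + (r:ℤ) * (X r : ℤ)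
      + ((r:ℤ)+1) * (X (r+1) : ℤ) := by
    rw [hq_succ (k := r+1), hq_succ (k := r)]; push_cast; ring
  have hqY2 : (hq Y (r+2) : ℤ) = (hq Y r : ℤ) + (r:ℤ) * (Y r : ℤ)
      + ((r:ℤ)+1) * (Y (r+1) : ℤ) := by
    rw [hq_succ (k := r+1), hq_succ (k := r)]; push_cast; ring
  have htuY1 : tu Y T (r+1) = (r:ℤ) * ((X r : ℤ) - (Y r : ℤ))
      + ((r:ℤ)+1) * ((X (r+1) : ℤ) - (Y (r+1) : ℤ)) := by
    have h1 : tu Y T (r+1) - tu X T (r+1) = (hq X (r+2) : ℤ) - (hq Y (r+2) : ℤ) := by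
      simp only [tu]; ring
    rw [htuX1, hqX2, hqY2, hqhead] at h1
    linarith
  obtain ⟨N, hN1, hNs⟩ := exists_stab X Y
  -- the key invariant
  have key : ∀ m, r ≤ m → (∀ j, r+1 ≤ j → j ≤ m+1 → 0 < sg X T j) →
      ((m:ℤ)+1) * Df X Y (m+2) ≥ ((m:ℤ)+2) * tu Y T (m+1) + 1 := by
    intro m hm
    induction m, hm using Nat.le_induction with
    | base =>
      intro _
      have hid : ((r:ℤ)+1) * Df X Y (r+2) - ((r:ℤ)+2) * tu Y T (r+1)
          = (X r : ℤ) - (Y r : ℤ) := by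
        rw [hDr2, htuY1]; ring
      linarith
    | succ m hm ih =>
      intro hpos
      have ih' := ih (fun j h1 h2 => hpos j h1 (le_trans h2 (by omega)))
      have htX1 : tu X T (m+1) = 0 := by
        rcases dich hX (m+1) with h | h
        · exact absurd h (by have := hpos (m+1) (by omega) (by omega); omega)
        · exact h
      have htX2 : tu X T (m+2) = 0 := by
        rcases dich hX (m+2) with h | h
        · exact absurd h (by have := hpos (m+2) (by omega) (by omega); omega)
        · exact h
      -- increments of tau
      have htinc : ∀ Z : ℕ →₀ ℕ, tu Z T (m+2) - tu Z T (m+1)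
          = ((m:ℤ)+2) * (T (m+1) : ℤ) - ((m:ℤ)+2) * (Z (m+2) : ℤ) := by
        intro Z
        simp only [tu, hE_succ (k := m+1), hq_succ (k := m+2)]
        push_cast; ring
      have hXT : ((m:ℤ)+2) * (T (m+1) : ℤ) = ((m:ℤ)+2) * (X (m+2) : ℤ) := by
        have h := htinc X
        rw [htX1, htX2] at h
        linarith
      have htY : tu Y T (m+2) = tu Y T (m+1)
          + ((m:ℤ)+2) * ((X (m+2) : ℤ) - (Y (m+2) : ℤ)) := by
        have h := htinc Y
        rw [hXT] at h
        linarith [h, mul_sub ((m:ℤ)+2) ((X (m+2) : ℤ)) ((Y (m+2) : ℤ))]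
      have hDstep : Df X Y (m+3) = Df X Y (m+2)
          + ((m:ℤ)+3) * ((X (m+2) : ℤ) - (Y (m+2) : ℤ)) := by
        simp only [Df]
        rw [hE_succ (f := X) (k := m+2), hE_succ (f := Y) (k := m+2)]
        push_cast; ring
      have htn := tu_nonneg hY (m+1)
      have hgap : 1 ≤ Df X Y (m+2) - tu Y T (m+1) := by
        by_contra hc
        push_neg at hc
        have h0 : Df X Y (m+2) - tu Y T (m+1) ≤ 0 := by omega
        have h1 : ((m:ℤ)+1) * (Df X Y (m+2) - tu Y T (m+1)) ≤ 0 :=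
          mul_nonpos_of_nonneg_of_nonpos (by positivity) h0
        nlinarith [ih']
      have hkey : ((m:ℤ)+2) * Df X Y (m+3) - ((m:ℤ)+3) * tu Y T (m+2)
          = (((m:ℤ)+1) * Df X Y (m+2) - ((m:ℤ)+2) * tu Y T (m+1))
            + (Df X Y (m+2) - tu Y T (m+1)) := by
        rw [hDstep, htY]; ring
      have e1 : m+1+2 = m+3 := by omega
      have e2 : m+1+1 = m+2 := by omega
      rw [e1, e2]
      push_cast
      linarith [hkey, ih', hgap]
  -- terminal case analysis
  by_cases hex : ∃ j, (r+1 ≤ j ∧ sg X T j = 0)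
  · obtain ⟨j₀, ⟨hj₀r, hj₀z⟩, hj₀min⟩ := exists_min hex
    have hj₀r2 : r+2 ≤ j₀ := by
      rcases Nat.lt_or_ge j₀ (r+2) with h | h
      · have : j₀ = r+1 := by omega
        rw [this] at hj₀z
        omega
      · exact h
    obtain ⟨m, rfl, hmr⟩ : ∃ m, j₀ = m + 2 ∧ r ≤ m := ⟨j₀ - 2, by omega, by omega⟩
    have hpos : ∀ j, r+1 ≤ j → j ≤ m+1 → 0 < sg X T j := by
      intro j h1 h2
      rcases (sg_nonneg hX j).lt_or_eq with h | h
      · exact h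
      · exact absurd (hj₀min j (by omega) ⟨h1, h.symm⟩) (by simp)
    have hk := key m hmr hpos
    have htn := tu_nonneg hY (m+1)
    have hprod : 0 ≤ ((m:ℤ)+2) * tu Y T (m+1) := mul_nonneg (by positivity) htn
    have hDpos : 0 < Df X Y (m+2) := by
      by_contra hc
      push_neg at hc
      have : ((m:ℤ)+1) * Df X Y (m+2) ≤ 0 :=
        mul_nonpos_of_nonneg_of_nonpos (by positivity) hc
      linarith
    have hDneg : Df X Y (m+2) ≤ 0 := by
      have h1 := sg_nonneg hY (m+2)
      have h2 := sg_sub_sg X Y T (m+2)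
      rw [hj₀z] at h2
      linarith
    linarith
  · push_neg at hex
    have hpos : ∀ j, r+1 ≤ j → j ≤ (N + r) + 1 → 0 < sg X T j := by
      intro j h1 _
      have h2 := sg_nonneg hX j
      have h3 := hex j h1
      omega
    have hk := key (N + r) (by omega) hpos
    have hDzero : Df X Y (N + r + 2) = 0 := by
      have h1 := (hNs (N+r+2) (by omega)).2.1
      have h2 := (hNs (N+r+2) (by omega)).2.2.2
      simp only [Df, h1, h2]
      exact sub_eq_zero.2 (by exact_mod_cast hEq)
    rw [hDzero] at hk
    have htn := tu_nonneg hY (N + r + 1)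
    have hprod : 0 ≤ ((N:ℤ)+(r:ℤ)+2) * tu Y T (N + r + 1) := mul_nonneg (by positivity) htn
    push_cast at hk
    linarith

/-- Core uniqueness: the interlacing system plus total weight determines the datum. -/
theorem core_unique (hX : Sys X T) (hY : Sys Y T) (hEq : eT X = eT Y) : X = Y := by
  by_contra hne
  have hex : ∃ j, X j ≠ Y j := by
    by_contra hc
    push_neg at hc
    exact hne (Finsupp.ext hc)
  obtain ⟨r, hr, hrmin⟩ := exists_min hex
  have hmin : ∀ j, j < r → X j = Y j := by
    intro j hj
    by_contra hc
    exact (hrmin j hj) hc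
  rcases Nat.lt_or_ge (Y r) (X r) with h | h
  · exact core_aux hX hY hEq r hmin h
  · have hlt : X r < Y r := by omega
    exact core_aux hY hX hEq.symm r (fun j hj => (hmin j hj).symm) hlt

end Core


/-- The lattice `L = ℤα₀ ⊕ ℤα₁`, a vector `(x, y)` standing for `xα₀ + yα₁`;
`(v, ω₀) = x` is the first coordinate and `(v, ω₁) = y` the second. -/
abbrev LatL := ℤ × ℤ

def alpha0 : LatL := (1, 0)
def alpha1 : LatL := (0, 1)
def deltaL : LatL := (1, 1)

/-- A Lusztig datum: a finitely supported sequence `(a_k)_{k≥1}` (here `a k = a_{k+1}`),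
a partition `lam` (a multiset of positive integers), and a finitely supported sequence
`(a^k)_{k≥1}` (here `A k = a^{k+1}`). -/
structure LusztigDatum where
  a : ℕ →₀ ℕ
  lam : Multiset ℕ
  A : ℕ →₀ ℕ
  lam_pos : ∀ x ∈ lam, 0 < x

namespace LusztigDatum

/-- The lower vertex `μ_k = ∑_{j=1}^k a_j (sroot + (j−1)δ)`. -/
def muLow (d : LusztigDatum) (sroot : LatL) (k : ℕ) : LatL :=
  ∑ j ∈ Finset.range k, (d.a j) • (sroot + j • deltaL)

/-- The vertex `μ_∞`. -/
def muInf (d : LusztigDatum) (sroot : LatL) : LatL :=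
  d.a.sum fun j m => m • (sroot + j • deltaL)

/-- The vertex `μ^∞ = μ_∞ + |λ|δ`. -/
def muTopInf (d : LusztigDatum) (sroot : LatL) : LatL :=
  d.muInf sroot + (d.lam.sum) • deltaL

/-- The upper vertex `μ^k = μ^∞ + ∑_{j>k} a^j (oroot + (j−1)δ)`. -/
def muHigh (d : LusztigDatum) (sroot oroot : LatL) (k : ℕ) : LatL :=
  d.muTopInf sroot + ∑ j ∈ d.A.support.filter (fun j => k ≤ j), (d.A j) • (oroot + j • deltaL)

end LusztigDatum

/-- An affine `sl₂` MV polytope: a pair of Lusztig data (right datum `R`, left datum `L`)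
of the same weight, satisfying the conditions (i)–(iv) of
Baumann–Dunlap–Kamnitzer–Tingley. -/
structure MVPolytope where
  R : LusztigDatum
  L : LusztigDatum
  closing : R.muHigh alpha1 alpha0 0 = L.muHigh alpha0 alpha1 0
  cond_low : ∀ k : ℕ, 2 ≤ k →
    (L.muLow alpha0 k - R.muLow alpha1 (k - 1)).2 ≤ 0 ∧
    (R.muLow alpha1 k - L.muLow alpha0 (k - 1)).1 ≤ 0 ∧
    ((L.muLow alpha0 k - R.muLow alpha1 (k - 1)).2 = 0 ∨
      (R.muLow alpha1 k - L.muLow alpha0 (k - 1)).1 = 0)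
  cond_high : ∀ k : ℕ, 2 ≤ k →
    0 ≤ (L.muHigh alpha0 alpha1 k - R.muHigh alpha1 alpha0 (k - 1)).1 ∧
    0 ≤ (R.muHigh alpha1 alpha0 k - L.muHigh alpha0 alpha1 (k - 1)).2 ∧
    ((L.muHigh alpha0 alpha1 k - R.muHigh alpha1 alpha0 (k - 1)).1 = 0 ∨
      (R.muHigh alpha1 alpha0 k - L.muHigh alpha0 alpha1 (k - 1)).2 = 0)
  cond_parts :
    (if (R.muInf alpha1 - L.muInf alpha0).1 * (R.muTopInf alpha1 - L.muTopInf alpha0).2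
        = (R.muInf alpha1 - L.muInf alpha0).2 * (R.muTopInf alpha1 - L.muTopInf alpha0).1
     then R.lam = L.lam
     else ∃ n : ℕ,
        (n : ℤ) = (R.muInf alpha1 - L.muInf alpha0).2 - (R.muInf alpha1 - L.muInf alpha0).1 ∧
        (R.lam = n ::ₘ L.lam ∨ L.lam = n ::ₘ R.lam))
  cond_size : ∀ x : ℕ, (x ∈ R.lam ∨ x ∈ L.lam) →
    (x : ℤ) ≤ (R.muInf alpha1 - L.muInf alpha0).2 - (R.muInf alpha1 - L.muInf alpha0).1

/-- `MVf i n P Q` says `Q = f_i^n(P)`: for `i = 1` the right datum of `Q` is that of `P`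
with `a_1` increased by `n`; for `i = 0` the left datum of `Q` is that of `P` with `ā_1`
increased by `n` (the other datum is then determined, by BDKT Theorem 3.11). -/
def MVf (i : ZMod 2) (n : ℕ) (P Q : MVPolytope) : Prop :=
  if i = 1 then
    Q.R.a = P.R.a + Finsupp.single 0 n ∧ Q.R.lam = P.R.lam ∧ Q.R.A = P.R.A
  else
    Q.L.a = P.L.a + Finsupp.single 0 n ∧ Q.L.lam = P.L.lam ∧ Q.L.A = P.L.A

/-- The trivial (highest weight) MV polytope: all data vanish. -/
def IsTrivialMV (P : MVPolytope) : Prop :=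
  P.R.a = 0 ∧ P.R.lam = 0 ∧ P.R.A = 0 ∧ P.L.a = 0 ∧ P.L.lam = 0 ∧ P.L.A = 0

/-- A top polytope: `λ = λ̄ = ∅` and `a_k = ā_k = 0` for all `k ≥ 2`. -/
def IsTopMV (P : MVPolytope) : Prop :=
  P.R.lam = 0 ∧ P.L.lam = 0 ∧ (∀ k, 1 ≤ k → P.R.a k = 0) ∧ (∀ k, 1 ≤ k → P.L.a k = 0)

/-- A δ-top polytope: `a_k = ā_k = 0` for all `k ≥ 2`. -/
def IsDeltaTopMV (P : MVPolytope) : Prop :=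
  (∀ k, 1 ≤ k → P.R.a k = 0) ∧ (∀ k, 1 ≤ k → P.L.a k = 0)

/-- `P = f_{i_0}^{k_0} ⋯ f_{i_{t-1}}^{k_{t-1}}(P₀)` with `P₀` the trivial MV polytope:
a chain `Q t = P₀, …, Q 0 = P` with `Q j = f_{i_j}^{k_j}(Q (j+1))`. -/
def FWordChain (t : ℕ) (k : ℕ → ℕ) (i : ℕ → ZMod 2) (P : MVPolytope) : Prop :=
  ∃ Q : ℕ → MVPolytope, IsTrivialMV (Q t) ∧ Q 0 = P ∧
    ∀ j, j < t → MVf (i j) (k j) (Q (j + 1)) (Q j)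



/-- tail sums over the support -/
def tailq (f : ℕ →₀ ℕ) (k : ℕ) : ℕ := ∑ j ∈ f.support.filter (fun j => k ≤ j), j * f j
def tailE (f : ℕ →₀ ℕ) (k : ℕ) : ℕ := ∑ j ∈ f.support.filter (fun j => k ≤ j), (j+1) * f j

private lemma head_eq_filter (f : ℕ →₀ ℕ) (k : ℕ) (w : ℕ → ℕ) :
    ∑ j ∈ Finset.range k, w j * f j = ∑ j ∈ f.support.filter (fun j => ¬ k ≤ j), w j * f j := by
  symm
  apply Finset.sum_subset
  · intro x hx
    simp only [Finset.mem_filter, not_le] at hx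
    exact Finset.mem_range.2 hx.2
  · intro x hx1 hx2
    simp only [Finset.mem_filter, Finsupp.mem_support_iff, not_le, not_and, not_lt] at hx2
    rcases Classical.em (f x = 0) with h | h
    · simp [h]
    · exact absurd (hx2 h) (not_le.2 (Finset.mem_range.1 hx1))

lemma head_add_tailq (f : ℕ →₀ ℕ) (k : ℕ) : hq f k + tailq f k = qT f := by
  have hsplit := Finset.sum_filter_add_sum_filter_not f.support (fun j => k ≤ j)
    (fun j => j * f j)
  have hhead := head_eq_filter f k (fun j => j)
  rw [qT, Finsupp.sum, tailq, hq]
  omega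

lemma head_add_tailE (f : ℕ →₀ ℕ) (k : ℕ) : hE f k + tailE f k = eT f := by
  have hsplit := Finset.sum_filter_add_sum_filter_not f.support (fun j => k ≤ j)
    (fun j => (j+1) * f j)
  have hhead := head_eq_filter f k (fun j => j+1)
  rw [eT, Finsupp.sum, tailE, hE]
  omega

lemma tailq_zero (f : ℕ →₀ ℕ) : tailq f 0 = qT f := by
  have := head_add_tailq f 0
  simpa [hq_zero] using this

lemma tailE_zero (f : ℕ →₀ ℕ) : tailE f 0 = eT f := by
  have := head_add_tailE f 0
  simpa [hE_zero] using this

namespace LusztigDatum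

lemma muLow_a1 (d : LusztigDatum) (k : ℕ) :
    d.muLow alpha1 k = (((hq d.a k : ℕ) : ℤ), ((hE d.a k : ℕ) : ℤ)) := by
  rw [muLow, hq, hE, Prod.ext_iff]
  constructor
  · rw [Prod.fst_sum]
    push_cast
    exact Finset.sum_congr rfl fun j _ => by simp [alpha1, deltaL]; ring
  · rw [Prod.snd_sum]
    push_cast
    exact Finset.sum_congr rfl fun j _ => by simp [alpha1, deltaL]; ring

lemma muLow_a0 (d : LusztigDatum) (k : ℕ) :
    d.muLow alpha0 k = (((hE d.a k : ℕ) : ℤ), ((hq d.a k : ℕ) : ℤ)) := by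
  rw [muLow, hq, hE, Prod.ext_iff]
  constructor
  · rw [Prod.fst_sum]
    push_cast
    exact Finset.sum_congr rfl fun j _ => by simp [alpha0, deltaL]; ring
  · rw [Prod.snd_sum]
    push_cast
    exact Finset.sum_congr rfl fun j _ => by simp [alpha0, deltaL]; ring

lemma muInf_a1 (d : LusztigDatum) :
    d.muInf alpha1 = (((qT d.a : ℕ) : ℤ), ((eT d.a : ℕ) : ℤ)) := by
  rw [muInf, qT, eT, Finsupp.sum, Finsupp.sum, Prod.ext_iff]
  constructor
  · rw [Prod.fst_sum]
    push_cast
    exact Finset.sum_congr rfl fun j _ => by simp [alpha1, deltaL]; ring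
  · rw [Prod.snd_sum]
    push_cast
    exact Finset.sum_congr rfl fun j _ => by simp [alpha1, deltaL]; ring

lemma muInf_a0 (d : LusztigDatum) :
    d.muInf alpha0 = (((eT d.a : ℕ) : ℤ), ((qT d.a : ℕ) : ℤ)) := by
  rw [muInf, qT, eT, Finsupp.sum, Finsupp.sum, Prod.ext_iff]
  constructor
  · rw [Prod.fst_sum]
    push_cast
    exact Finset.sum_congr rfl fun j _ => by simp [alpha0, deltaL]; ring
  · rw [Prod.snd_sum]
    push_cast
    exact Finset.sum_congr rfl fun j _ => by simp [alpha0, deltaL]; ring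

lemma nsmul_deltaL (n : ℕ) : n • deltaL = ((n : ℤ), (n : ℤ)) := by
  rw [deltaL, Prod.ext_iff]
  constructor <;> simp

lemma muTopInf_a1 (d : LusztigDatum) :
    d.muTopInf alpha1 = (((qT d.a + d.lam.sum : ℕ) : ℤ), ((eT d.a + d.lam.sum : ℕ) : ℤ)) := by
  rw [muTopInf, muInf_a1, nsmul_deltaL, Prod.mk_add_mk]
  simp [Nat.cast_add]

lemma muTopInf_a0 (d : LusztigDatum) :
    d.muTopInf alpha0 = (((eT d.a + d.lam.sum : ℕ) : ℤ), ((qT d.a + d.lam.sum : ℕ) : ℤ)) := by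
  rw [muTopInf, muInf_a0, nsmul_deltaL, Prod.mk_add_mk]
  simp [Nat.cast_add]

lemma tail_sum_o0 (A : ℕ →₀ ℕ) (k : ℕ) :
    (∑ j ∈ A.support.filter (fun j => k ≤ j), (A j) • (alpha0 + j • deltaL))
      = (((tailE A k : ℕ) : ℤ), ((tailq A k : ℕ) : ℤ)) := by
  rw [Prod.ext_iff]
  constructor
  · rw [Prod.fst_sum, tailE, Nat.cast_sum]
    refine Finset.sum_congr rfl fun j _ => ?_
    simp [alpha0, deltaL]
    push_cast
    ring
  · rw [Prod.snd_sum, tailq, Nat.cast_sum]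
    refine Finset.sum_congr rfl fun j _ => ?_
    simp [alpha0, deltaL]
    push_cast
    ring

lemma tail_sum_o1 (A : ℕ →₀ ℕ) (k : ℕ) :
    (∑ j ∈ A.support.filter (fun j => k ≤ j), (A j) • (alpha1 + j • deltaL))
      = (((tailq A k : ℕ) : ℤ), ((tailE A k : ℕ) : ℤ)) := by
  rw [Prod.ext_iff]
  constructor
  · rw [Prod.fst_sum, tailq, Nat.cast_sum]
    refine Finset.sum_congr rfl fun j _ => ?_
    simp [alpha1, deltaL]
    push_cast
    ring
  · rw [Prod.snd_sum, tailE, Nat.cast_sum]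
    refine Finset.sum_congr rfl fun j _ => ?_
    simp [alpha1, deltaL]
    push_cast
    ring

lemma muHighR (d : LusztigDatum) (k : ℕ) :
    d.muHigh alpha1 alpha0 k
      = (((qT d.a + d.lam.sum + tailE d.A k : ℕ) : ℤ),
         ((eT d.a + d.lam.sum + tailq d.A k : ℕ) : ℤ)) := by
  rw [muHigh, muTopInf_a1, tail_sum_o0, Prod.mk_add_mk]
  simp [Nat.cast_add]

lemma muHighL (d : LusztigDatum) (k : ℕ) :
    d.muHigh alpha0 alpha1 k
      = (((eT d.a + d.lam.sum + tailq d.A k : ℕ) : ℤ),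
         ((qT d.a + d.lam.sum + tailE d.A k : ℕ) : ℤ)) := by
  rw [muHigh, muTopInf_a0, tail_sum_o1, Prod.mk_add_mk]
  simp [Nat.cast_add]

end LusztigDatum

namespace MVPolytope

variable (X : MVPolytope)

/-- the low interlacing system -/
lemma sys_low : Sys X.L.a X.R.a := by
  intro m hm
  obtain ⟨h1, h2, h3⟩ := X.cond_low (m+1) (by omega)
  simp only [LusztigDatum.muLow_a0, LusztigDatum.muLow_a1, Nat.add_sub_cancel,
    Prod.mk_sub_mk, Prod.fst, Prod.snd] at h1 h2 h3
  refine ⟨?_, ?_, ?_⟩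
  · exact_mod_cast sub_nonpos.1 h1
  · exact_mod_cast sub_nonpos.1 h2
  · rcases h3 with h | h
    · left; exact_mod_cast sub_eq_zero.1 h
    · right; exact_mod_cast sub_eq_zero.1 h

/-- the two weight equations from the closing condition -/
lemma weight_x :
    qT X.R.a + X.R.lam.sum + eT X.R.A = eT X.L.a + X.L.lam.sum + qT X.L.A := by
  have h := X.closing
  rw [LusztigDatum.muHighR, LusztigDatum.muHighL, Prod.mk.injEq] at h
  have h1 := h.1
  rw [tailE_zero, tailq_zero] at h1
  exact_mod_cast h1

lemma weight_y :
    eT X.R.a + X.R.lam.sum + qT X.R.A = qT X.L.a + X.L.lam.sum + eT X.L.A := by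
  have h := X.closing
  rw [LusztigDatum.muHighR, LusztigDatum.muHighL, Prod.mk.injEq] at h
  have h2 := h.2
  rw [tailE_zero, tailq_zero] at h2
  exact_mod_cast h2

/-- the high interlacing system -/
lemma sys_high : Sys X.L.A X.R.A := by
  intro m hm
  obtain ⟨h1, h2, h3⟩ := X.cond_high (m+1) (by omega)
  simp only [LusztigDatum.muHighR, LusztigDatum.muHighL, Nat.add_sub_cancel,
    Prod.mk_sub_mk, Prod.fst, Prod.snd] at h1 h2 h3
  have h1' : qT X.R.a + X.R.lam.sum + tailE X.R.A m
      ≤ eT X.L.a + X.L.lam.sum + tailq X.L.A (m+1) := by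
    have := sub_nonneg.1 h1
    exact_mod_cast this
  have h2' : qT X.L.a + X.L.lam.sum + tailE X.L.A m
      ≤ eT X.R.a + X.R.lam.sum + tailq X.R.A (m+1) := by
    have := sub_nonneg.1 h2
    exact_mod_cast this
  have wx := X.weight_x
  have wy := X.weight_y
  have tLq := head_add_tailq X.L.A (m+1)
  have tLq' := head_add_tailq X.L.A m
  have tLE := head_add_tailE X.L.A m
  have tLE' := head_add_tailE X.L.A (m+1)
  have tRq := head_add_tailq X.R.A (m+1)
  have tRq' := head_add_tailq X.R.A m
  have tRE := head_add_tailE X.R.A m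
  have tRE' := head_add_tailE X.R.A (m+1)
  refine ⟨by omega, by omega, ?_⟩
  rcases h3 with h | h
  · left
    have h' : eT X.L.a + X.L.lam.sum + tailq X.L.A (m+1)
        = qT X.R.a + X.R.lam.sum + tailE X.R.A m := by
      have := sub_eq_zero.1 h
      exact_mod_cast this
    omega
  · right
    have h' : eT X.R.a + X.R.lam.sum + tailq X.R.A (m+1)
        = qT X.L.a + X.L.lam.sum + tailE X.L.A m := by
      have := sub_eq_zero.1 h
      exact_mod_cast this
    omega

end MVPolytope


lemma qT_single0 (a : ℕ) : qT (Finsupp.single 0 a) = 0 := by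
  rw [qT, Finsupp.sum_single_index (by simp)]
  simp

lemma eT_single0 (a : ℕ) : eT (Finsupp.single 0 a) = a := by
  rw [eT, Finsupp.sum_single_index (by simp)]
  simp

lemma sT_single0 (a : ℕ) : sT (Finsupp.single 0 a) = a := by
  rw [sT, Finsupp.sum_single_index]
  rfl

lemma hq_single0 (a k : ℕ) : hq (Finsupp.single 0 a) k = 0 := by
  rw [hq]
  apply Finset.sum_eq_zero
  intro j _
  rcases Nat.eq_zero_or_pos j with rfl | hj
  · simp
  · rw [Finsupp.single_apply, if_neg (by omega)]
    simp

lemma hE_single0 (a : ℕ) {k : ℕ} (hk : 1 ≤ k) : hE (Finsupp.single 0 a) k = a := by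
  rw [hE]
  rw [Finset.sum_eq_single 0]
  · simp
  · intro j _ hj
    simp [Finsupp.single_apply, Ne.symm hj]
  · intro h
    exact absurd (Finset.mem_range.2 (by omega)) h

lemma qT_zero : qT (0 : ℕ →₀ ℕ) = 0 := by simp [qT]
lemma eT_zero : eT (0 : ℕ →₀ ℕ) = 0 := by simp [eT]
lemma sT_zero : sT (0 : ℕ →₀ ℕ) = 0 := by simp [sT]

lemma sT_le_eT (f : ℕ →₀ ℕ) : sT f ≤ eT f := by
  rw [sT, eT, Finsupp.sum, Finsupp.sum]
  exact Finset.sum_le_sum fun j _ => Nat.le_mul_of_pos_left _ (by omega)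

lemma eT_zero_iff {f : ℕ →₀ ℕ} (h : eT f = 0) : f = 0 := by
  apply sT_eq_zero
  have := sT_le_eT f
  omega

lemma lam_sum_pos (d : LusztigDatum) (h : d.lam ≠ 0) : 0 < d.lam.sum := by
  obtain ⟨x, hx⟩ := Multiset.exists_mem_of_ne_zero h
  have h1 := d.lam_pos x hx
  have h2 : x ≤ d.lam.sum := Multiset.single_le_sum (fun y hy => Nat.zero_le y) x hx
  omega

/-- dichotomy from the lower system when the right lower datum is a single -/
lemma low_dich {l : ℕ →₀ ℕ} {a : ℕ} (h : Sys l (Finsupp.single 0 a)) :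
    l = 0 ∨ qT l = a := by
  obtain ⟨N, hN1, hNs⟩ := exists_stab l l
  rcases (h N hN1).2.2 with hc | hc
  · right
    rw [hE_single0 a hN1] at hc
    rw [← hc]
    exact ((hNs (N+1) (by omega)).1).symm
  · left
    rw [hq_single0] at hc
    apply eT_zero_iff
    rw [← (hNs N le_rfl).2.1, ← hc]

section Main

variable (X : MVPolytope) (a : ℕ) (S W : ℕ →₀ ℕ)

/-- M2: the bound lemma. -/
lemma main_bound (hRa : X.R.a = Finsupp.single 0 a) (hRlam : X.R.lam = 0) (hRA : X.R.A = S)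
    (hW : Cert W S) : X.L.a = 0 ∨ (sT X.L.a + a = sT S + sT W) := by
  have hsysl : Sys X.L.a (Finsupp.single 0 a) := by
    have := X.sys_low
    rwa [hRa] at this
  rcases low_dich hsysl with h0 | hqla
  · exact Or.inl h0
  · right
    have hsysh : Sys X.L.A S := by
      have := X.sys_high
      rwa [hRA] at this
    -- Sys at infinity
    obtain ⟨N, hN1, hNs⟩ := exists_stab X.L.A S
    have hinf : qT S ≤ eT X.L.A := by
      have h := (hsysh N hN1).2.1
      rw [(hNs (N+1) (by omega)).2.2.1, (hNs N le_rfl).2.1] at h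
      exact h
    have wy := X.weight_y
    rw [hRa, hRlam, hRA, eT_single0, hqla] at wy
    simp only [Multiset.sum_zero] at wy
    -- wy : a + 0 + qT S = a + X.L.lam.sum + eT X.L.A
    have hlam0 : X.L.lam.sum = 0 ∧ eT X.L.A = qT S := by omega
    have hAW : X.L.A = W := by
      apply core_unique hsysh hW.1
      rw [hlam0.2, hW.2]
    have wx := X.weight_x
    rw [hRa, hRlam, hRA, qT_single0, hAW] at wx
    simp only [Multiset.sum_zero] at wx
    -- wx : 0 + 0 + eT S = eT X.L.a + X.L.lam.sum + qT W
    have e1 := eT_eq_qT_add_sT X.L.a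
    have e2 := eT_eq_qT_add_sT S
    have e3 := eT_eq_qT_add_sT W
    have e4 := hW.2
    have e5 := hlam0.1
    omega

/-- M1: the hidden-side determination lemma. -/
lemma main_determine (hRa : X.R.a = Finsupp.single 0 a) (hRlam : X.R.lam = 0)
    (hRA : X.R.A = S) (hW : Cert W S) (hlt : sT W + sT S < a) :
    X.L.a = 0 ∧ X.L.lam = 0 ∧
      (Sys X.L.A S ∧ qT X.L.A = eT S ∧ eT X.L.A = a + qT S) := by
  have hsT : sT X.L.a + a ≠ sT S + sT W := by omega
  have hl0 : X.L.a = 0 := by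
    rcases main_bound X a S W hRa hRlam hRA hW with h | h
    · exact h
    · omega
  have hsysh : Sys X.L.A S := by
    have := X.sys_high
    rwa [hRA] at this
  have ha1 : 1 ≤ a := by omega
  -- eliminate a nontrivial left partition via cond_parts
  have hlam : X.L.lam = 0 := by
    by_contra hne
    have hΛ : 0 < X.L.lam.sum := lam_sum_pos X.L hne
    have hp := X.cond_parts
    have hIR : X.R.muInf alpha1 = ((0 : ℤ), (a : ℤ)) := by
      rw [LusztigDatum.muInf_a1, hRa, qT_single0, eT_single0]
      simp
    have hIL : X.L.muInf alpha0 = ((0 : ℤ), (0 : ℤ)) := by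
      rw [LusztigDatum.muInf_a0, hl0, qT_zero, eT_zero]
      simp
    have hTR : X.R.muTopInf alpha1 = ((0 : ℤ), (a : ℤ)) := by
      rw [LusztigDatum.muTopInf_a1, hRa, hRlam, qT_single0, eT_single0]
      simp
    have hTL : X.L.muTopInf alpha0 = (((X.L.lam.sum : ℕ) : ℤ), ((X.L.lam.sum : ℕ) : ℤ)) := by
      rw [LusztigDatum.muTopInf_a0, hl0, qT_zero, eT_zero]
      simp
    rw [hIR, hIL, hTR, hTL] at hp
    have hcond : ¬ (((0 : ℤ), (a : ℤ)) - ((0 : ℤ), (0 : ℤ))).1 *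
        ((((0 : ℤ), (a : ℤ)) - (((X.L.lam.sum : ℕ) : ℤ), ((X.L.lam.sum : ℕ) : ℤ)))).2 =
        
        (((0 : ℤ), (a : ℤ)) - ((0 : ℤ), (0 : ℤ))).2 *
        ((((0 : ℤ), (a : ℤ)) - (((X.L.lam.sum : ℕ) : ℤ), ((X.L.lam.sum : ℕ) : ℤ)))).1 := by
      simp only [Prod.mk_sub_mk, Prod.fst, Prod.snd]
      have : (0 : ℤ) < (a : ℤ) * (X.L.lam.sum : ℤ) := by
        apply mul_pos <;> exact_mod_cast (by omega : (0:ℕ) < _)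
      intro hc
      simp only [sub_zero, zero_sub, zero_mul] at hc
      nlinarith
    rw [if_neg hcond] at hp
    obtain ⟨n, hn, hcase⟩ := hp
    have hna : n = a := by
      simp only [Prod.mk_sub_mk, Prod.fst, Prod.snd, sub_zero] at hn
      exact_mod_cast hn
    rcases hcase with hc | hc
    · rw [hRlam] at hc
      exact absurd hc.symm (Multiset.cons_ne_zero)
    · -- L.lam = {a}; derive the contradiction with hlt
      have hΛa : X.L.lam.sum = a := by
        rw [hc, hRlam, hna]
        simp
      have wy := X.weight_y
      rw [hRa, hRlam, hRA, eT_single0, hl0, qT_zero, hΛa] at wy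
      simp only [Multiset.sum_zero] at wy
      have hEA : eT X.L.A = qT S := by omega
      have hAW : X.L.A = W := by
        apply core_unique hsysh hW.1
        rw [hEA, hW.2]
      have wx := X.weight_x
      rw [hRa, hRlam, hRA, qT_single0, hl0, eT_zero, hΛa, hAW] at wx
      simp only [Multiset.sum_zero] at wx
      have e2 := eT_eq_qT_add_sT S
      have e3 := eT_eq_qT_add_sT W
      have e4 := hW.2
      omega
  refine ⟨hl0, hlam, hsysh, ?_, ?_⟩
  · have wx := X.weight_x
    rw [hRa, hRlam, hRA, hl0, hlam, qT_single0, eT_zero] at wx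
    simp only [Multiset.sum_zero] at wx
    omega
  · have wy := X.weight_y
    rw [hRa, hRlam, hRA, hl0, hlam, eT_single0, qT_zero] at wy
    simp only [Multiset.sum_zero] at wy
    omega

end Main

namespace MVPolytope

/-- The mirror polytope: swap left/right data and the two coordinates. -/
def swapP (X : MVPolytope) : MVPolytope where
  R := X.L
  L := X.R
  closing := by
    rw [LusztigDatum.muHighR, LusztigDatum.muHighL, tailq_zero, tailE_zero,
      tailq_zero, tailE_zero, Prod.mk.injEq]
    have wx := X.weight_x
    have wy := X.weight_y
    constructor
    · exact_mod_cast wy.symm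
    · exact_mod_cast wx.symm
  cond_low := by
    intro k hk
    obtain ⟨m, rfl⟩ : ∃ m, k = m + 2 := ⟨k - 2, by omega⟩
    obtain ⟨s1, s2, s3⟩ := X.sys_low (m+1) (by omega)
    simp only [show m+1+1 = m+2 from rfl] at s1 s2 s3
    simp only [LusztigDatum.muLow_a0, LusztigDatum.muLow_a1,
      show m+2-1 = m+1 from rfl, Prod.mk_sub_mk, Prod.fst, Prod.snd]
    refine ⟨?_, ?_, ?_⟩
    · rw [sub_nonpos]
      exact_mod_cast s2
    · rw [sub_nonpos]
      exact_mod_cast s1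
    · rcases s3 with h | h
      · right
        rw [sub_eq_zero]
        exact_mod_cast h
      · left
        rw [sub_eq_zero]
        exact_mod_cast h
  cond_high := by
    intro k hk
    obtain ⟨m, rfl⟩ : ∃ m, k = m + 2 := ⟨k - 2, by omega⟩
    obtain ⟨s1, s2, s3⟩ := X.sys_high (m+1) (by omega)
    simp only [show m+1+1 = m+2 from rfl] at s1 s2 s3
    have wx := X.weight_x
    have wy := X.weight_y
    have tLq := head_add_tailq X.L.A (m+2)
    have tLq' := head_add_tailq X.L.A (m+1)
    have tLE := head_add_tailE X.L.A (m+1)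
    have tRq := head_add_tailq X.R.A (m+2)
    have tRq' := head_add_tailq X.R.A (m+1)
    have tRE := head_add_tailE X.R.A (m+1)
    simp only [LusztigDatum.muHighR, LusztigDatum.muHighL,
      show m+2-1 = m+1 from rfl, Prod.mk_sub_mk, Prod.fst, Prod.snd]
    refine ⟨?_, ?_, ?_⟩
    · rw [sub_nonneg]
      have : eT X.R.a + X.R.lam.sum + tailq X.R.A (m+2)
          ≥ qT X.L.a + X.L.lam.sum + tailE X.L.A (m+1) := by omega
      exact_mod_cast this
    · rw [sub_nonneg]
      have : eT X.L.a + X.L.lam.sum + tailq X.L.A (m+2)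
          ≥ qT X.R.a + X.R.lam.sum + tailE X.R.A (m+1) := by omega
      exact_mod_cast this
    · rcases s3 with h | h
      · right
        rw [sub_eq_zero]
        have : eT X.L.a + X.L.lam.sum + tailq X.L.A (m+2)
            = qT X.R.a + X.R.lam.sum + tailE X.R.A (m+1) := by omega
        exact_mod_cast this
      · left
        rw [sub_eq_zero]
        have : eT X.R.a + X.R.lam.sum + tailq X.R.A (m+2)
            = qT X.L.a + X.L.lam.sum + tailE X.L.A (m+1) := by omega
        exact_mod_cast this
  cond_parts := by
    have hp := X.cond_parts
    simp only [LusztigDatum.muInf_a0, LusztigDatum.muInf_a1, LusztigDatum.muTopInf_a0,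
      LusztigDatum.muTopInf_a1, Prod.mk_sub_mk, Prod.fst, Prod.snd] at hp ⊢
    by_cases hc : ((qT X.R.a : ℤ) - (eT X.L.a : ℤ)) *
        (((eT X.R.a + X.R.lam.sum : ℕ) : ℤ) - ((qT X.L.a + X.L.lam.sum : ℕ) : ℤ)) =
        ((eT X.R.a : ℤ) - (qT X.L.a : ℤ)) *
        (((qT X.R.a + X.R.lam.sum : ℕ) : ℤ) - ((eT X.L.a + X.L.lam.sum : ℕ) : ℤ))
    · rw [if_pos hc] at hp
      rw [if_pos (by push_cast at hc ⊢; linear_combination -hc)]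
      exact hp.symm
    · rw [if_neg hc] at hp
      rw [if_neg (by
        intro hcc
        exact hc (by push_cast at hcc ⊢; linear_combination -hcc))]
      obtain ⟨n, hn, hcase⟩ := hp
      refine ⟨n, by push_cast at hn ⊢; linarith, hcase.symm⟩
  cond_size := by
    intro x hx
    have hs := X.cond_size x hx.symm
    simp only [LusztigDatum.muInf_a0, LusztigDatum.muInf_a1, Prod.mk_sub_mk,
      Prod.fst, Prod.snd] at hs ⊢
    linarith

end MVPolytope


/-- chain invariant, case where the right side is active -/
def InvE (X : MVPolytope) (a : ℕ) : Prop :=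
  ∃ B C W : ℕ →₀ ℕ, X.R.a = Finsupp.single 0 a ∧ X.R.lam = 0 ∧ X.R.A = B ∧
    X.L.a = 0 ∧ X.L.lam = 0 ∧ X.L.A = C ∧
    Cert W B ∧ sT W + sT B < a ∧
    Sys C B ∧ qT C = eT B ∧ eT C = a + qT B

/-- chain invariant, case where the left side is active -/
def InvO (X : MVPolytope) (a : ℕ) : Prop :=
  ∃ B C W : ℕ →₀ ℕ, X.L.a = Finsupp.single 0 a ∧ X.L.lam = 0 ∧ X.L.A = B ∧
    X.R.a = 0 ∧ X.R.lam = 0 ∧ X.R.A = C ∧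
    Cert W B ∧ sT W + sT B < a ∧
    Sys C B ∧ qT C = eT B ∧ eT C = a + qT B

lemma invO_swap {X : MVPolytope} {a : ℕ} (h : InvE (X.swapP) a) : InvO X a := h

lemma invE_swap {X : MVPolytope} {a : ℕ} (h : InvO (X.swapP) a) : InvE X a := h

/-- The R-active determination: from known right datum to the full invariant. -/
lemma stepE (X : MVPolytope) (a : ℕ) (S W : ℕ →₀ ℕ)
    (hRa : X.R.a = Finsupp.single 0 a) (hRlam : X.R.lam = 0) (hRA : X.R.A = S)
    (hW : Cert W S) (hlt : sT W + sT S < a) : InvE X a := by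
  obtain ⟨hl0, hlam, hsys, hqA, hEA⟩ := main_determine X a S W hRa hRlam hRA hW hlt
  exact ⟨S, X.L.A, W, hRa, hRlam, hRA, hl0, hlam, rfl, hW, hlt, hsys, hqA, hEA⟩

/-- The L-active determination (mirror). -/
lemma stepO (X : MVPolytope) (a : ℕ) (S W : ℕ →₀ ℕ)
    (hLa : X.L.a = Finsupp.single 0 a) (hLlam : X.L.lam = 0) (hLA : X.L.A = S)
    (hW : Cert W S) (hlt : sT W + sT S < a) : InvO X a :=
  invO_swap (stepE (X.swapP) a S W hLa hLlam hLA hW hlt)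

/-- the certificate transported one step up the chain -/
lemma cert_next {a : ℕ} {B C W : ℕ →₀ ℕ} (hW : Cert W B) (hsys : Sys C B)
    (hqC : qT C = eT B) (hEC : eT C = a + qT B) :
    Cert B C ∧ sT B + sT C = a := by
  refine ⟨⟨hsys.symm, hqC.symm⟩, ?_⟩
  have h1 := eT_eq_qT_add_sT B
  have h2 := eT_eq_qT_add_sT C
  omega

section Chain

variable (t : ℕ) (k : ℕ → ℕ) (i : ℕ → ZMod 2) (Q : ℕ → MVPolytope)

lemma chain_inv (ht : 0 < t)
    (hk : ∀ j, j + 1 < t → k (j + 1) < k j) (hkpos : ∀ j, j < t → 0 < k j)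
    (hi : ∀ j, j + 1 < t → i (j + 1) = i j + 1) (hi1 : i 0 = 1)
    (htriv : IsTrivialMV (Q t))
    (hstep : ∀ j, j < t → MVf (i j) (k j) (Q (j + 1)) (Q j)) :
    ∀ j, j < t → ((Even j → InvE (Q j) (k j)) ∧ (¬ Even j → InvO (Q j) (k j))) := by
  -- the index word alternates starting with 1
  have hipar : ∀ j, j < t → i j = if Even j then 1 else 0 := by
    intro j
    induction j with
    | zero => intro _; simpa using hi1
    | succ j ih =>
      intro hj
      have h1 := hi j hj
      have h2 := ih (by omega)
      rcases Nat.even_or_odd j with he | ho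
      · rw [if_neg (by simp [Nat.even_add_one, he])]
        rw [h1, h2, if_pos he]
        decide
      · rw [if_pos (by simp [Nat.even_add_one, Nat.not_even_iff_odd.2 ho])]
        rw [h1, h2, if_neg (Nat.not_even_iff_odd.2 ho)]
        decide
  -- descending induction via t - j
  suffices H : ∀ n j, j < t → t - j = n + 1 →
      ((Even j → InvE (Q j) (k j)) ∧ (¬ Even j → InvO (Q j) (k j))) by
    intro j hj
    exact H (t - j - 1) j hj (by omega)
  intro n
  induction n with
  | zero =>
    intro j hj htj
    have hjt : j + 1 = t := by omega
    have hm := hstep j hj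
    rw [hjt] at hm
    obtain ⟨hT1, hT2, hT3, hT4, hT5, hT6⟩ := htriv
    have hcert : Cert (0 : ℕ →₀ ℕ) 0 := ⟨Sys.zero_zero, by rw [eT_zero, qT_zero]⟩
    have hszero : sT (0 : ℕ →₀ ℕ) + sT (0 : ℕ →₀ ℕ) < k j := by
      rw [sT_zero]
      simpa using hkpos j hj
    constructor
    · intro he
      rw [MVf, if_pos (by rw [hipar j hj, if_pos he])] at hm
      obtain ⟨m1, m2, m3⟩ := hm
      rw [hT1, zero_add] at m1
      rw [hT2] at m2
      rw [hT3] at m3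
      exact stepE (Q j) (k j) 0 0 m1 m2 m3 hcert hszero
    · intro ho
      rw [MVf, if_neg (by rw [hipar j hj, if_neg ho]; decide)] at hm
      obtain ⟨m1, m2, m3⟩ := hm
      rw [hT4, zero_add] at m1
      rw [hT5] at m2
      rw [hT6] at m3
      exact stepO (Q j) (k j) 0 0 m1 m2 m3 hcert hszero
  | succ n ih =>
    intro j hj htj
    have hj1 : j + 1 < t := by omega
    have ihs := ih (j + 1) hj1 (by omega)
    have hm := hstep j hj
    have hklt := hk j hj1
    constructor
    · intro he
      -- j even, j+1 odd
      have hodd : ¬ Even (j + 1) := by simp [Nat.even_add_one, he]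
      obtain ⟨B, C, W, p1, p2, p3, p4, p5, p6, pc, plt, psys, pq, pE⟩ := ihs.2 hodd
      rw [MVf, if_pos (by rw [hipar j hj, if_pos he])] at hm
      obtain ⟨m1, m2, m3⟩ := hm
      rw [p4, zero_add] at m1
      rw [p5] at m2
      rw [p6] at m3
      obtain ⟨hcert, hsum⟩ := cert_next pc psys pq pE
      exact stepE (Q j) (k j) C B m1 m2 m3 hcert (by omega)
    · intro ho
      have heven : Even (j + 1) := by
        rcases Nat.even_or_odd j with h | h
        · exact absurd h ho
        · simpa [Nat.even_add_one] using Nat.not_even_iff_odd.2 h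
      obtain ⟨B, C, W, p1, p2, p3, p4, p5, p6, pc, plt, psys, pq, pE⟩ := ihs.1 heven
      rw [MVf, if_neg (by rw [hipar j hj, if_neg ho]; decide)] at hm
      obtain ⟨m1, m2, m3⟩ := hm
      rw [p4, zero_add] at m1
      rw [p5] at m2
      rw [p6] at m3
      obtain ⟨hcert, hsum⟩ := cert_next pc psys pq pE
      exact stepO (Q j) (k j) C B m1 m2 m3 hcert (by omega)

end Chain


/-- For a top polytope `P = f_1^{k_1} f_0^{k_2} ⋯ (P₀)` with
`k_1 > ⋯ > k_t > 0` and first index `i_1 = 1`, we have `a_1(P) = k_1`, and for every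
`1 ≤ K ≤ k_1` the polytope `e_1^K(P)` has `ā_1 < K`. -/
theorem top_polytope_eOne_left_datum (P : MVPolytope) (t : ℕ) (ht : 0 < t)
    (k : ℕ → ℕ) (i : ℕ → ZMod 2)
    (hk : ∀ j, j + 1 < t → k (j + 1) < k j) (hkpos : ∀ j, j < t → 0 < k j)
    (hi : ∀ j, j + 1 < t → i (j + 1) = i j + 1) (hi1 : i 0 = 1)
    (hchain : FWordChain t k i P) :
    P.R.a 0 = k 0 ∧
    ∀ K : ℕ, 1 ≤ K → K ≤ k 0 → ∀ P' : MVPolytope, MVf 1 K P' P → P'.L.a 0 < K := by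
  obtain ⟨Q, htriv, hQ0, hstep⟩ := hchain
  have hinv := chain_inv t k i Q ht hk hkpos hi hi1 htriv (fun j hj => hstep j hj) 0 ht
  have hIE : InvE P (k 0) := by
    rw [← hQ0]
    exact hinv.1 Even.zero
  obtain ⟨B, C, W, p1, p2, p3, _, _, _, pc, plt, _, _, _⟩ := hIE
  constructor
  · rw [p1]
    simp
  · intro K hK1 hKk P' hf
    rw [MVf, if_pos rfl] at hf
    obtain ⟨m1, m2, m3⟩ := hf
    have hP'a : P'.R.a = Finsupp.single 0 (k 0 - K) := by
      ext j
      have hj := DFunLike.congr_fun m1 j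
      rw [p1] at hj
      rw [Finsupp.add_apply] at hj
      rcases Nat.eq_zero_or_pos j with rfl | hjpos
      · simp only [Finsupp.single_eq_same] at hj ⊢
        omega
      · have hne : (0:ℕ) ≠ j := by omega
        simp only [Finsupp.single_eq_of_ne' hne] at hj ⊢
        omega
    have hP'lam : P'.R.lam = 0 := by rw [← m2, p2]
    have hP'A : P'.R.A = B := by rw [← m3, p3]
    rcases main_bound P' (k 0 - K) B W hP'a hP'lam hP'A pc with h | h
    · rw [h]
      simpa using Nat.lt_of_lt_of_le Nat.zero_lt_one hK1
    · have hle := apply_le_sT P'.L.a 0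
      omega


end MVPaper
end
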